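/- arXiv:2506.07420 — 5 statements merged into one kernel-verified Lean document; each statement's English description precedes it below -/
import Mathlib

section
/- Let p = 2, let A be a torsion-free ℤ_2-algebra, and let (M_n)_{n≥0} be an A-valued 2-adic moment sequence. Then for all integers m ≥ 0 and i ≥ 1, the difference M_{m+2^i} − M_m lies in 2^{i+2}·A. -/
open scoped TensorProduct

/-- An `A`-valued `p`-adic moment sequence: for every polynomial `f(r) = ∑ aₙ rⁿ` with
rational coefficients taking `ℤ_p`-integral values on `ℤ_p^×`, the element
`∑ aₙ · Mₙ` of `A ⊗ ℚ` lies in the image of the natural map `A → A ⊗ ℚ`. -/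
def IsPadicMomentSeq (p : ℕ) [Fact p.Prime] {A : Type*} [CommRing A] (M : ℕ → A) : Prop :=
  ∀ f : Polynomial ℚ,
    (∀ x : ℤ_[p]ˣ, ‖Polynomial.aeval ((x : ℤ_[p]) : ℚ_[p]) f‖ ≤ 1) →
    ∃ y : A, (∑ n ∈ f.support, (M n) ⊗ₜ[ℤ] (f.coeff n)) = y ⊗ₜ[ℤ] (1 : ℚ)

lemma aux_two_dvd_sq_add (a : ℤ_[2]) : (2 : ℤ_[2]) ∣ a ^ 2 + a := by
  have h : PadicInt.toZMod (a ^ 2 + a) = 0 := by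
    have h2 : ∀ t : ZMod 2, t ^ 2 + t = 0 := by decide
    simpa using h2 (PadicInt.toZMod a)
  have hm : a ^ 2 + a ∈ RingHom.ker (PadicInt.toZMod : ℤ_[2] →+* ZMod 2) := h
  rw [PadicInt.ker_toZMod, PadicInt.maximalIdeal_eq_span_p] at hm
  have := Ideal.mem_span_singleton.mp hm
  simpa using this

lemma aux_two_dvd_sub_one (x : ℤ_[2]) (hx : IsUnit x) : (2 : ℤ_[2]) ∣ x - 1 := by
  have hu : IsUnit (PadicInt.toZMod x) := hx.map (PadicInt.toZMod : ℤ_[2] →+* ZMod 2)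
  have h1 : PadicInt.toZMod x = 1 := by
    have : ∀ t : ZMod 2, t ≠ 0 → t = 1 := by decide
    exact this _ hu.ne_zero
  have h : PadicInt.toZMod (x - 1) = 0 := by simp [h1]
  have hm : x - 1 ∈ RingHom.ker (PadicInt.toZMod : ℤ_[2] →+* ZMod 2) := h
  rw [PadicInt.ker_toZMod, PadicInt.maximalIdeal_eq_span_p] at hm
  have := Ideal.mem_span_singleton.mp hm
  simpa using this

lemma aux_pow_dvd (x : ℤ_[2]) (hx : IsUnit x) :
    ∀ i : ℕ, 1 ≤ i → (2 : ℤ_[2]) ^ (i + 2) ∣ x ^ 2 ^ i - 1 := by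
  intro i hi
  induction i, hi using Nat.le_induction with
  | base =>
    obtain ⟨a, ha⟩ := aux_two_dvd_sub_one x hx
    obtain ⟨b, hb⟩ := aux_two_dvd_sq_add a
    refine ⟨b, ?_⟩
    have goal : x ^ 2 - 1 = 2 ^ 3 * b := by
      linear_combination (x + 1 + 2 * a) * ha + 4 * hb
    simpa using goal
  | succ i hi ih =>
    have h1 : (2 : ℤ_[2]) ∣ x ^ 2 ^ i + 1 := by
      obtain ⟨c, hc⟩ := ih
      exact ⟨2 ^ (i + 1) * c + 1, by rw [← sub_add_cancel (x ^ 2 ^ i) 1, hc]; ring⟩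
    have key : x ^ 2 ^ (i + 1) - 1 = (x ^ 2 ^ i - 1) * (x ^ 2 ^ i + 1) := by
      rw [pow_succ, pow_mul]; ring
    rw [key, show i + 1 + 2 = (i + 2) + 1 from rfl, pow_succ]
    exact mul_dvd_mul ih h1

/-- for `p = 2`, a torsion-free `ℤ_2`-algebra `A` and an `A`-valued
`2`-adic moment sequence `(Mₙ)`, for all `m ≥ 0` and `i ≥ 1` one has
`M_{m+2ⁱ} − M_m ∈ 2^{i+2}·A`. -/
theorem momentSeq_kummer_two (A : Type*) [CommRing A] [Algebra ℤ_[2] A]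
    (htf : Function.Injective fun a : A => a ⊗ₜ[ℤ] (1 : ℚ))
    (M : ℕ → A) (hM : IsPadicMomentSeq 2 M) (m i : ℕ) (hi : 1 ≤ i) :
    M (m + 2 ^ i) - M m ∈ Ideal.span {(2 : A) ^ (i + 2)} := by
  set n := m + 2 ^ i with hn
  set c : ℚ := ((2 : ℚ) ^ (i + 2))⁻¹ with hc
  have hc0 : c ≠ 0 := by positivity
  have hnm : n ≠ m := by
    simp only [hn]; have : 0 < 2 ^ i := Nat.pow_pos (by norm_num); omega
  set f : Polynomial ℚ := Polynomial.C c * Polynomial.X ^ n + Polynomial.C (-c) * Polynomial.X ^ m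
    with hf
  have hsupp : f.support = {n, m} :=
    Polynomial.support_binomial hnm hc0 (neg_ne_zero.mpr hc0)
  have hcoeffn : f.coeff n = c := by
    simp [hf, Polynomial.coeff_C_mul, Polynomial.coeff_X_pow, hnm, Ne.symm hnm]
  have hcoeffm : f.coeff m = -c := by
    simp [hf, Polynomial.coeff_C_mul, Polynomial.coeff_X_pow, hnm, Ne.symm hnm]
  -- the norm condition
  have hnorm : ∀ x : ℤ_[2]ˣ, ‖Polynomial.aeval ((x : ℤ_[2]) : ℚ_[2]) f‖ ≤ 1 := by
    intro x
    set z : ℚ_[2] := ((x : ℤ_[2]) : ℚ_[2]) with hz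
    have hdvd : (2 : ℤ_[2]) ^ (i + 2) ∣ (x : ℤ_[2]) ^ 2 ^ i - 1 :=
      aux_pow_dvd _ x.isUnit i hi
    have hmem : (x : ℤ_[2]) ^ 2 ^ i - 1 ∈
        Ideal.span {(2 : ℤ_[2]) ^ (i + 2)} := Ideal.mem_span_singleton.mpr hdvd
    have hmem' : (x : ℤ_[2]) ^ 2 ^ i - 1 ∈
        Ideal.span {((2 : ℕ) : ℤ_[2]) ^ (i + 2)} := by simpa using hmem
    have hnormZ : ‖(x : ℤ_[2]) ^ 2 ^ i - 1‖ ≤ (2 : ℝ) ^ (-(i + 2 : ℕ) : ℤ) := by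
      have := (PadicInt.norm_le_pow_iff_mem_span_pow ((x : ℤ_[2]) ^ 2 ^ i - 1) (i + 2)).mpr hmem'
      simpa using this
    have hnormQ : ‖z ^ 2 ^ i - 1‖ ≤ (2 : ℝ) ^ (-(i + 2 : ℕ) : ℤ) := by
      have : ((((x : ℤ_[2]) ^ 2 ^ i - 1 : ℤ_[2])) : ℚ_[2]) = z ^ 2 ^ i - 1 := by
        push_cast [hz]; ring
      rw [← this, ← PadicInt.norm_def]; exact hnormZ
    have hzn : ‖z‖ = 1 := by
      rw [hz, ← PadicInt.norm_def]
      exact PadicInt.isUnit_iff.mp x.isUnit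
    have heval : Polynomial.aeval z f = (c : ℚ_[2]) * (z ^ m * (z ^ 2 ^ i - 1)) := by
      simp only [hf, map_add, map_mul, map_pow, Polynomial.aeval_C, Polynomial.aeval_X]
      have : (algebraMap ℚ ℚ_[2]) c = (c : ℚ_[2]) := rfl
      rw [this, show (algebraMap ℚ ℚ_[2]) (-c) = -(c : ℚ_[2]) by push_cast [this]; ring]
      rw [hn, pow_add]; ring
    have hcnorm : ‖(c : ℚ_[2])‖ = (2 : ℝ) ^ (i + 2 : ℕ) := by
      have h2 : ‖(2 : ℚ_[2])‖ = (2 : ℝ)⁻¹ := by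
        have := @Padic.norm_p 2 _
        simpa using this
      rw [hc]
      push_cast
      rw [norm_inv, norm_pow, h2]
      simp
    rw [heval, norm_mul, norm_mul, norm_pow, hzn, one_pow, one_mul, hcnorm]
    calc (2 : ℝ) ^ (i + 2 : ℕ) * ‖z ^ 2 ^ i - 1‖
        ≤ (2 : ℝ) ^ (i + 2 : ℕ) * (2 : ℝ) ^ (-(i + 2 : ℕ) : ℤ) := by
          apply mul_le_mul_of_nonneg_left hnormQ (by positivity)
      _ = 1 := by
          rw [← zpow_natCast (2 : ℝ) (i + 2), ← zpow_add₀ (by norm_num : (2:ℝ) ≠ 0),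
            add_neg_cancel, zpow_zero]
  obtain ⟨y, hy⟩ := hM f hnorm
  rw [hsupp, Finset.sum_insert (by simpa using hnm), Finset.sum_singleton,
    hcoeffn, hcoeffm] at hy
  have key : M n ⊗ₜ[ℤ] c - M m ⊗ₜ[ℤ] c = y ⊗ₜ[ℤ] (1 : ℚ) := by
    rw [← hy, TensorProduct.tmul_neg]; ring
  have h1c : (1 : ℚ) = ((2 : ℤ) ^ (i + 2)) • c := by
    rw [zsmul_eq_mul, hc]; push_cast; field_simp
  have h1 : (M n - M m) ⊗ₜ[ℤ] (1 : ℚ) = (((2 : ℤ) ^ (i + 2)) • y) ⊗ₜ[ℤ] (1 : ℚ) := by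
    calc (M n - M m) ⊗ₜ[ℤ] (1 : ℚ)
        = (M n - M m) ⊗ₜ[ℤ] (((2 : ℤ) ^ (i + 2)) • c) := by rw [← h1c]
      _ = ((2 : ℤ) ^ (i + 2)) • ((M n - M m) ⊗ₜ[ℤ] c) := by
          rw [TensorProduct.tmul_smul]
      _ = ((2 : ℤ) ^ (i + 2)) • (M n ⊗ₜ[ℤ] c - M m ⊗ₜ[ℤ] c) := by
          rw [TensorProduct.sub_tmul]
      _ = ((2 : ℤ) ^ (i + 2)) • (y ⊗ₜ[ℤ] (1 : ℚ)) := by rw [key]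
      _ = (((2 : ℤ) ^ (i + 2)) • y) ⊗ₜ[ℤ] (1 : ℚ) := by
          rw [TensorProduct.smul_tmul']
  have h2 : M n - M m = ((2 : ℤ) ^ (i + 2)) • y := htf h1
  rw [Ideal.mem_span_singleton]
  exact ⟨y, by rw [h2, zsmul_eq_mul]; push_cast; ring⟩
end

section
/- For every prime p, every unit c ∈ ℤ_p^×, and every integer n ≥ 1, the element (1 − c^n)·(1 − p^{n−1})·B_n/n of ℚ_p lies in ℤ_p. -/
open Finset

lemma pow_add_aux {R : Type*} [CommRing R] (x y : R) (k : ℕ) :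
    ∃ z : R, (x + y) ^ (k + 1) = x ^ (k + 1) + (k + 1 : ℕ) * x ^ k * y + y ^ 2 * z := by
  induction k with
  | zero => exact ⟨0, by push_cast; ring⟩
  | succ k ih =>
    obtain ⟨z, hz⟩ := ih
    refine ⟨x * z + ((k : R) + 1) * x ^ k + y * z, ?_⟩
    rw [pow_succ (x + y), hz]
    push_cast
    ring

lemma sum_units_mul {m : ℕ} [NeZero m] (v : (ZMod m)ˣ) {β : Type*} [AddCommMonoid β]
    (f : ℕ → β) :
    ∑ a ∈ range m, f (((v : ZMod m) * (a : ZMod m)).val) = ∑ a ∈ range m, f a := by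
  refine Finset.sum_nbij' (i := fun a => (((v : ZMod m)) * (a : ZMod m)).val)
    (j := fun b => (((v⁻¹ : (ZMod m)ˣ) : ZMod m) * (b : ZMod m)).val) ?_ ?_ ?_ ?_ ?_
  · intro a ha; exact mem_range.2 (ZMod.val_lt _)
  · intro b hb; exact mem_range.2 (ZMod.val_lt _)
  · intro a ha
    rw [ZMod.natCast_zmod_val, ← mul_assoc, ← Units.val_mul, inv_mul_cancel, Units.val_one,
      one_mul, ZMod.val_cast_of_lt (mem_range.1 ha)]
  · intro b hb
    rw [ZMod.natCast_zmod_val, ← mul_assoc, ← Units.val_mul, mul_inv_cancel, Units.val_one,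
      one_mul, ZMod.val_cast_of_lt (mem_range.1 hb)]
  · intro a ha; rfl

lemma rat_mul_den (q : ℚ) : q * (q.den : ℚ) = (q.num : ℚ) := by
  have hden : (q.den : ℚ) ≠ 0 := Nat.cast_ne_zero.2 q.den_nz
  calc q * (q.den : ℚ) = ((q.num : ℚ) / (q.den : ℚ)) * q.den := by rw [Rat.num_div_den]
    _ = (q.num : ℚ) := div_mul_cancel₀ _ hden

lemma faulhaber_decomp (n m : ℕ) :
    (∑ a ∈ range m, (a : ℚ) ^ n) = bernoulli n * m +
      (m : ℚ) ^ 2 * ∑ i ∈ range n, bernoulli i * ((n + 1).choose i) * (m : ℚ) ^ (n - 1 - i) / (n + 1) := by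
  have hn1 : ((n : ℚ) + 1) ≠ 0 := by positivity
  rw [sum_range_pow, Finset.sum_range_succ]
  have hlast : bernoulli n * ((n + 1).choose n) * (m : ℚ) ^ (n + 1 - n) / (n + 1)
      = bernoulli n * m := by
    rw [Nat.choose_succ_self_right, Nat.add_sub_cancel_left]
    push_cast
    field_simp
  rw [hlast]
  have hsum : ∑ i ∈ range n, bernoulli i * ((n + 1).choose i) * (m : ℚ) ^ (n + 1 - i) / (n + 1)
      = ∑ i ∈ range n, (m : ℚ) ^ 2 * (bernoulli i * ((n + 1).choose i) * (m : ℚ) ^ (n - 1 - i) / (n + 1)) := by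
    refine Finset.sum_congr rfl fun i hi => ?_
    have h2 : n + 1 - i = (n - 1 - i) + 2 := by
      have := mem_range.1 hi; omega
    rw [h2, pow_add]
    ring
  rw [hsum, ← Finset.mul_sum, add_comm]

lemma Q_clear (n m : ℕ) :
    ∃ w : ℤ, (((n + 1 : ℕ) : ℚ) * (∏ j ∈ range n, ((bernoulli j).den : ℚ))) *
      (∑ i ∈ range n, bernoulli i * ((n + 1).choose i) * (m : ℚ) ^ (n - 1 - i) / (n + 1)) = (w : ℚ) := by
  refine ⟨∑ i ∈ range n, (bernoulli i).num * (∏ j ∈ (range n).erase i, ((bernoulli j).den : ℤ)) *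
      ((n + 1).choose i) * (m : ℤ) ^ (n - 1 - i), ?_⟩
  rw [Finset.mul_sum]
  push_cast
  refine Finset.sum_congr rfl fun i hi => ?_
  have hprod : (∏ j ∈ range n, ((bernoulli j).den : ℚ)) =
      ((bernoulli i).den : ℚ) * ∏ j ∈ (range n).erase i, ((bernoulli j).den : ℚ) :=
    (Finset.mul_prod_erase _ _ hi).symm
  have hn1 : ((n : ℚ) + 1) ≠ 0 := by positivity
  rw [hprod]
  field_simp
  rw [← rat_mul_den (bernoulli i)]; ring


section
variable (p : ℕ) [hp : Fact p.Prime]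

lemma core_identity (c : ℤ_[p]ˣ) (k M : ℕ) :
    ∃ E Z : ℤ_[p],
      (1 - (c : ℤ_[p]) ^ (k + 1)) * (∑ a ∈ range (p ^ M), ((a : ℕ) : ℤ_[p]) ^ (k + 1)) =
        -(((k + 1 : ℕ) : ℤ_[p]) * (c : ℤ_[p]) ^ k * ((p : ℤ_[p]) ^ M) * E) +
          ((p : ℤ_[p]) ^ M) ^ 2 * Z := by
  haveI : NeZero (p ^ M) := ⟨pow_ne_zero _ hp.out.ne_zero⟩
  set u : (ZMod (p ^ M))ˣ := Units.map (PadicInt.toZModPow M).toMonoidHom c with hu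
  set σ : ℕ → ℕ :=
    fun a => (((u⁻¹ : (ZMod (p ^ M))ˣ) : ZMod (p ^ M)) * (a : ZMod (p ^ M))).val with hσdef
  have hσ : ∀ a : ℕ, (p : ℤ_[p]) ^ M ∣ ((c : ℤ_[p]) * (σ a : ℤ_[p]) - (a : ℤ_[p])) := by
    intro a
    rw [← Ideal.mem_span_singleton, ← PadicInt.ker_toZModPow, RingHom.mem_ker]
    rw [map_sub, map_mul, map_natCast, map_natCast]
    have h1 : ((σ a : ℕ) : ZMod (p ^ M)) =
        ((u⁻¹ : (ZMod (p ^ M))ˣ) : ZMod (p ^ M)) * (a : ZMod (p ^ M)) := by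
      rw [hσdef]; exact ZMod.natCast_zmod_val _
    have h2 : (PadicInt.toZModPow M) (c : ℤ_[p]) = (u : ZMod (p ^ M)) := rfl
    rw [h1, h2, ← mul_assoc, ← Units.val_mul, mul_inv_cancel, Units.val_one, one_mul, sub_self]
  choose e he using hσ
  have ha_eq : ∀ a : ℕ, ((a : ℕ) : ℤ_[p]) =
      (c : ℤ_[p]) * (σ a : ℤ_[p]) + -((p : ℤ_[p]) ^ M * e a) := by
    intro a
    have h := he a
    linear_combination -h
  have hz : ∀ a : ℕ, ∃ z : ℤ_[p], ((a : ℕ) : ℤ_[p]) ^ (k + 1) =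
      ((c : ℤ_[p]) * (σ a : ℤ_[p])) ^ (k + 1) +
        ((k + 1 : ℕ) : ℤ_[p]) * ((c : ℤ_[p]) * (σ a : ℤ_[p])) ^ k * (-((p : ℤ_[p]) ^ M * e a)) +
        (-((p : ℤ_[p]) ^ M * e a)) ^ 2 * z := by
    intro a
    obtain ⟨z, hzz⟩ := pow_add_aux ((c : ℤ_[p]) * (σ a : ℤ_[p])) (-((p : ℤ_[p]) ^ M * e a)) k
    exact ⟨z, by rw [ha_eq a, hzz]⟩
  choose z hzs using hz
  refine ⟨∑ a ∈ range (p ^ M), ((σ a : ℕ) : ℤ_[p]) ^ k * e a,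
    ∑ a ∈ range (p ^ M), (e a) ^ 2 * z a, ?_⟩
  have h1 : (∑ a ∈ range (p ^ M), ((a : ℕ) : ℤ_[p]) ^ (k + 1)) =
      ∑ a ∈ range (p ^ M),
        ((c : ℤ_[p]) ^ (k + 1) * ((σ a : ℕ) : ℤ_[p]) ^ (k + 1) -
          ((k + 1 : ℕ) : ℤ_[p]) * (c : ℤ_[p]) ^ k * ((p : ℤ_[p]) ^ M) *
            (((σ a : ℕ) : ℤ_[p]) ^ k * e a) +
          ((p : ℤ_[p]) ^ M) ^ 2 * ((e a) ^ 2 * z a)) := by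
    refine Finset.sum_congr rfl fun a _ => ?_
    rw [hzs a]
    ring
  have hre : ∑ a ∈ range (p ^ M), ((σ a : ℕ) : ℤ_[p]) ^ (k + 1) =
      ∑ a ∈ range (p ^ M), ((a : ℕ) : ℤ_[p]) ^ (k + 1) :=
    sum_units_mul u⁻¹ (fun t => ((t : ℕ) : ℤ_[p]) ^ (k + 1))
  have h2 : (∑ a ∈ range (p ^ M), ((a : ℕ) : ℤ_[p]) ^ (k + 1)) =
      (c : ℤ_[p]) ^ (k + 1) * (∑ a ∈ range (p ^ M), ((a : ℕ) : ℤ_[p]) ^ (k + 1)) -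
        ((k + 1 : ℕ) : ℤ_[p]) * (c : ℤ_[p]) ^ k * ((p : ℤ_[p]) ^ M) *
          (∑ a ∈ range (p ^ M), ((σ a : ℕ) : ℤ_[p]) ^ k * e a) +
        ((p : ℤ_[p]) ^ M) ^ 2 * (∑ a ∈ range (p ^ M), (e a) ^ 2 * z a) := by
    conv_lhs => rw [h1, Finset.sum_add_distrib, Finset.sum_sub_distrib, ← Finset.mul_sum,
      ← Finset.mul_sum, ← Finset.mul_sum, hre]
  linear_combination h2

end

section
variable {p : ℕ} [hp : Fact p.Prime]

lemma padic_coe_sum (s : Finset ℕ) (f : ℕ → ℤ_[p]) :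
    ((∑ a ∈ s, f a : ℤ_[p]) : ℚ_[p]) = ∑ a ∈ s, ((f a : ℤ_[p]) : ℚ_[p]) :=
  map_sum (PadicInt.Coe.ringHom) f s

lemma coe_norm_le_one (x : ℤ_[p]) : ‖(x : ℚ_[p])‖ ≤ 1 := by
  rw [PadicInt.padic_norm_e_of_padicInt]
  exact PadicInt.norm_le_one x

end

section
variable (p : ℕ) [hp : Fact p.Prime]

lemma core_norm (c : ℤ_[p]ˣ) (n : ℕ) (hn : 1 ≤ n) :
    ‖((1 - (c : ℤ_[p]) ^ n : ℤ_[p]) : ℚ_[p]) * ((bernoulli n / (n : ℚ) : ℚ) : ℚ_[p])‖ ≤ 1 := by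
  obtain ⟨k, rfl⟩ : ∃ k, n = k + 1 := ⟨n - 1, by omega⟩
  set d : ℕ := (k + 1 + 1) * ∏ j ∈ range (k + 1), (bernoulli j).den with hd_def
  have hdpos : 0 < d := Nat.mul_pos (Nat.succ_pos _)
    (Finset.prod_pos fun j _ => Nat.pos_of_ne_zero (bernoulli j).den_nz)
  have haN : (0 : ℝ) < ‖(((k + 1 : ℕ)) : ℚ_[p])‖ := by
    rw [norm_pos_iff]
    exact_mod_cast Nat.succ_ne_zero k
  have hbN : (0 : ℝ) < ‖((d : ℕ) : ℚ_[p])‖ := by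
    rw [norm_pos_iff]
    exact_mod_cast hdpos.ne'
  have hone_lt : (1 : ℝ) < (p : ℝ) := by exact_mod_cast hp.out.one_lt
  have hplt : (p : ℝ)⁻¹ < 1 := by
    rw [inv_lt_one_iff₀]
    right; exact hone_lt
  obtain ⟨M, hM⟩ := exists_pow_lt_of_lt_one (mul_pos haN hbN) hplt
  obtain ⟨E, Z, key⟩ := core_identity p c k M
  have keyQ := congrArg (fun x : ℤ_[p] => (x : ℚ_[p])) key
  simp only [padic_coe_sum, PadicInt.coe_mul, PadicInt.coe_sub, PadicInt.coe_add,
    PadicInt.coe_pow, PadicInt.coe_one, PadicInt.coe_neg, PadicInt.coe_natCast] at keyQ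
  -- Faulhaber decomposition, cast to ℚ_[p]
  have hSF : (∑ a ∈ range (p ^ M), ((a : ℕ) : ℚ_[p]) ^ (k + 1)) =
      ((bernoulli (k + 1) : ℚ) : ℚ_[p]) * (p : ℚ_[p]) ^ M + ((p : ℚ_[p]) ^ M) ^ 2 *
        ((∑ i ∈ range (k + 1), bernoulli i * ((k + 1 + 1).choose i) *
          ((p ^ M : ℕ) : ℚ) ^ (k + 1 - 1 - i) / (k + 1 + 1) : ℚ) : ℚ_[p]) := by
    have h0 : (∑ a ∈ range (p ^ M), ((a : ℕ) : ℚ_[p]) ^ (k + 1)) =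
        (((∑ a ∈ range (p ^ M), ((a : ℕ) : ℚ) ^ (k + 1)) : ℚ) : ℚ_[p]) := by
      push_cast; rfl
    rw [h0, faulhaber_decomp (k + 1) (p ^ M)]
    push_cast
    ring
  rw [hSF] at keyQ
  set Qc : ℚ_[p] := ((∑ i ∈ range (k + 1), bernoulli i * ((k + 1 + 1).choose i) *
    ((p ^ M : ℕ) : ℚ) ^ (k + 1 - 1 - i) / (k + 1 + 1) : ℚ) : ℚ_[p]) with hQc_def
  have hNne : (((k + 1 : ℕ)) : ℚ_[p]) ≠ 0 := by
    exact_mod_cast Nat.succ_ne_zero k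
  have hNne' : ((k : ℚ_[p]) + 1) ≠ 0 := by
    have : (((k + 1 : ℕ)) : ℚ_[p]) = (k : ℚ_[p]) + 1 := by push_cast; ring
    rw [← this]; exact hNne
  have hpne : ((p : ℚ_[p])) ≠ 0 := by
    exact_mod_cast hp.out.ne_zero
  have hmne : ((p : ℚ_[p]) ^ M) ≠ 0 := pow_ne_zero _ hpne
  -- cancel one factor of `p ^ M` from `keyQ`
  have main1 : (1 - ((c : ℤ_[p]) : ℚ_[p]) ^ (k + 1)) * ((bernoulli (k + 1) : ℚ) : ℚ_[p]) +
      (((k + 1 : ℕ)) : ℚ_[p]) * ((c : ℤ_[p]) : ℚ_[p]) ^ k * (E : ℚ_[p]) -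
      (p : ℚ_[p]) ^ M * (Z : ℚ_[p]) +
      (1 - ((c : ℤ_[p]) : ℚ_[p]) ^ (k + 1)) * (p : ℚ_[p]) ^ M * Qc = 0 := by
    have h' : ((1 - ((c : ℤ_[p]) : ℚ_[p]) ^ (k + 1)) * ((bernoulli (k + 1) : ℚ) : ℚ_[p]) +
        (((k + 1 : ℕ)) : ℚ_[p]) * ((c : ℤ_[p]) : ℚ_[p]) ^ k * (E : ℚ_[p]) -
        (p : ℚ_[p]) ^ M * (Z : ℚ_[p]) +
        (1 - ((c : ℤ_[p]) : ℚ_[p]) ^ (k + 1)) * (p : ℚ_[p]) ^ M * Qc) * ((p : ℚ_[p]) ^ M) =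
        0 * ((p : ℚ_[p]) ^ M) := by
      linear_combination keyQ
    exact mul_right_cancel₀ hmne h'
  have main : (1 - ((c : ℤ_[p]) : ℚ_[p]) ^ (k + 1)) *
        ((bernoulli (k + 1) : ℚ) : ℚ_[p]) / (((k + 1 : ℕ)) : ℚ_[p]) =
      -(((c : ℤ_[p]) : ℚ_[p]) ^ k * (E : ℚ_[p])) +
        ((p : ℚ_[p]) ^ M * (Z : ℚ_[p]) / (((k + 1 : ℕ)) : ℚ_[p]) -
          (1 - ((c : ℤ_[p]) : ℚ_[p]) ^ (k + 1)) * (p : ℚ_[p]) ^ M * Qc /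
            (((k + 1 : ℕ)) : ℚ_[p])) := by
    field_simp
    push_cast at main1 ⊢
    linear_combination main1
  have hgoal : ((1 - (c : ℤ_[p]) ^ (k + 1) : ℤ_[p]) : ℚ_[p]) *
      ((bernoulli (k + 1) / ((k + 1 : ℕ) : ℚ) : ℚ) : ℚ_[p]) =
      (1 - ((c : ℤ_[p]) : ℚ_[p]) ^ (k + 1)) *
        ((bernoulli (k + 1) : ℚ) : ℚ_[p]) / (((k + 1 : ℕ)) : ℚ_[p]) := by
    push_cast
    ring
  rw [hgoal, main]
  -- bounds for the three summands
  have hE1 : ‖-(((c : ℤ_[p]) : ℚ_[p]) ^ k * (E : ℚ_[p]))‖ ≤ 1 := by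
    rw [norm_neg, ← PadicInt.coe_pow, ← PadicInt.coe_mul]
    exact coe_norm_le_one _
  have hmq : ‖(p : ℚ_[p]) ^ M‖ = ((p : ℝ)⁻¹) ^ M := by
    rw [norm_pow, Padic.norm_p]
  have hZ1 : ‖(Z : ℚ_[p])‖ ≤ 1 := coe_norm_le_one _
  have hD1 : ‖((d : ℕ) : ℚ_[p])‖ ≤ 1 := by
    have := Padic.norm_int_le_one (p := p) (d : ℤ)
    push_cast at this
    exact this
  have hmN : ‖(p : ℚ_[p]) ^ M‖ ≤ ‖(((k + 1 : ℕ)) : ℚ_[p])‖ := by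
    rw [hmq]
    exact (hM.trans_le (mul_le_of_le_one_right haN.le hD1)).le
  have hY : ‖(p : ℚ_[p]) ^ M * (Z : ℚ_[p]) / (((k + 1 : ℕ)) : ℚ_[p])‖ ≤ 1 := by
    rw [norm_div, norm_mul, div_le_one haN]
    calc ‖(p : ℚ_[p]) ^ M‖ * ‖(Z : ℚ_[p])‖ ≤ ‖(p : ℚ_[p]) ^ M‖ :=
          mul_le_of_le_one_right (norm_nonneg _) hZ1
      _ ≤ _ := hmN
  obtain ⟨w, hw⟩ := Q_clear (k + 1) (p ^ M)
  have hwQ : ((d : ℕ) : ℚ_[p]) * Qc = ((w : ℤ) : ℚ_[p]) := by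
    have h := congrArg (fun q : ℚ => (q : ℚ_[p])) hw
    push_cast at h
    rw [hQc_def, hd_def]
    push_cast
    linear_combination h
  have hQbound : ‖Qc‖ ≤ 1 / ‖((d : ℕ) : ℚ_[p])‖ := by
    rw [le_div_iff₀ hbN, mul_comm, ← norm_mul, hwQ]
    exact Padic.norm_int_le_one w
  have hC1 : ‖1 - ((c : ℤ_[p]) : ℚ_[p]) ^ (k + 1)‖ ≤ 1 := by
    rw [← PadicInt.coe_one, ← PadicInt.coe_pow, ← PadicInt.coe_sub]
    exact coe_norm_le_one _
  have hW : ‖(1 - ((c : ℤ_[p]) : ℚ_[p]) ^ (k + 1)) * (p : ℚ_[p]) ^ M * Qc /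
      (((k + 1 : ℕ)) : ℚ_[p])‖ ≤ 1 := by
    rw [norm_div, norm_mul, norm_mul, div_le_one haN]
    have hnn : (0 : ℝ) ≤ ‖(p : ℚ_[p]) ^ M‖ := norm_nonneg _
    calc ‖1 - ((c : ℤ_[p]) : ℚ_[p]) ^ (k + 1)‖ * ‖(p : ℚ_[p]) ^ M‖ * ‖Qc‖
        ≤ ‖(p : ℚ_[p]) ^ M‖ * ‖Qc‖ :=
          mul_le_mul_of_nonneg_right (mul_le_of_le_one_left hnn hC1) (norm_nonneg _)
      _ ≤ ‖(p : ℚ_[p]) ^ M‖ * (1 / ‖((d : ℕ) : ℚ_[p])‖) :=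
          mul_le_mul_of_nonneg_left hQbound hnn
      _ ≤ ‖(((k + 1 : ℕ)) : ℚ_[p])‖ := by
          rw [hmq, mul_one_div, div_le_iff₀ hbN]
          exact le_of_lt hM
  refine (Padic.nonarchimedean _ _).trans (max_le hE1 ?_)
  rw [sub_eq_add_neg]
  refine (Padic.nonarchimedean _ _).trans (max_le hY ?_)
  rw [norm_neg]
  exact hW

end

/-- for every prime `p`, every unit `c ∈ ℤ_p^×` and every `n ≥ 1`, the
element `(1 − cⁿ)·(1 − p^{n−1})·Bₙ/n` of `ℚ_p` lies in `ℤ_p`. -/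
theorem regularized_bernoulli_integral (p : ℕ) [Fact p.Prime] (c : ℤ_[p]ˣ) (n : ℕ)
    (hn : 1 ≤ n) :
    ‖((1 - (c : ℤ_[p]) ^ n : ℤ_[p]) : ℚ_[p]) *
        ((((1 - (p : ℚ) ^ (n - 1)) * (bernoulli n / (n : ℚ))) : ℚ) : ℚ_[p])‖ ≤ 1 := by
  have hsplit : ((((1 - (p : ℚ) ^ (n - 1)) * (bernoulli n / (n : ℚ))) : ℚ) : ℚ_[p]) =
      (((1 - (p : ℚ) ^ (n - 1) : ℚ)) : ℚ_[p]) * ((bernoulli n / (n : ℚ) : ℚ) : ℚ_[p]) := by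
    push_cast
    ring
  rw [hsplit, ← mul_assoc, mul_comm (((1 - (c : ℤ_[p]) ^ n : ℤ_[p]) : ℚ_[p])), mul_assoc,
    norm_mul]
  have h1 : ‖(((1 - (p : ℚ) ^ (n - 1) : ℚ)) : ℚ_[p])‖ ≤ 1 := by
    have := Padic.norm_int_le_one (p := p) (1 - (p : ℤ) ^ (n - 1))
    push_cast at this
    exact this
  have h2 := core_norm p c n hn
  exact mul_le_one₀ h1 (norm_nonneg _) h2
end

section
/- In ℚ⟦X⟧ one has the identity (1 − exp(−X))·( ∑_{k≥0} S^k/k! ) = X, where S := ∑_{n≥1} (−B_n/n)·X^n/n!. Equivalently, the logarithm of X/(1 − e^{−X}) has exponential generating coefficients −B_n/n, i.e. the nepers of the Todd orientation are N_n^{Td} = −B_n/n. -/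
noncomputable section

/-- `S = ∑_{n≥1} (−Bₙ/n)·Xⁿ/n! ∈ ℚ⟦X⟧`, the generating series of the Todd nepers
`N_n^{Td} = −Bₙ/n`. -/
def toddNeperSeries : PowerSeries ℚ :=
  PowerSeries.mk fun n =>
    if n = 0 then 0 else (-(bernoulli n) / (n : ℚ)) * (1 / (n.factorial : ℚ))

/-- The formal exponential `∑_{k≥0} S^k/k!` of `S` (well defined since `S` has zero
constant term: only `k ≤ n` contribute to the coefficient of `Xⁿ`). -/
def expToddNeperSeries : PowerSeries ℚ :=
  PowerSeries.mk fun n =>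
    ∑ k ∈ Finset.range (n + 1),
      (1 / (k.factorial : ℚ)) * PowerSeries.coeff (R := ℚ) n (toddNeperSeries ^ k)

open PowerSeries Finset

namespace ToddAux

lemma constantCoeff_S : PowerSeries.constantCoeff (R := ℚ) toddNeperSeries = 0 := by
  rw [← PowerSeries.coeff_zero_eq_constantCoeff_apply]
  simp [toddNeperSeries]

lemma coeff_S_pow_eq_zero {n k : ℕ} (h : n < k) :
    PowerSeries.coeff (R := ℚ) n (toddNeperSeries ^ k) = 0 := by
  have hdvd : (PowerSeries.X : ℚ⟦X⟧) ^ k ∣ toddNeperSeries ^ k :=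
    pow_dvd_pow_of_dvd (PowerSeries.X_dvd_iff.mpr constantCoeff_S) k
  exact (PowerSeries.X_pow_dvd_iff.mp hdvd) n h

/-- Partial sums of the exponential of `S`. -/
def T (N : ℕ) : ℚ⟦X⟧ :=
  ∑ k ∈ Finset.range (N + 1),
    PowerSeries.C (R := ℚ) (1 / (k.factorial : ℚ)) * toddNeperSeries ^ k

lemma coeff_T (n N : ℕ) : PowerSeries.coeff (R := ℚ) n (T N) =
    ∑ k ∈ Finset.range (N + 1),
      (1 / (k.factorial : ℚ)) * PowerSeries.coeff (R := ℚ) n (toddNeperSeries ^ k) := by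
  simp [T]

lemma coeff_E_eq (n N : ℕ) (h : n ≤ N) :
    PowerSeries.coeff (R := ℚ) n expToddNeperSeries = PowerSeries.coeff (R := ℚ) n (T N) := by
  rw [coeff_T, expToddNeperSeries, PowerSeries.coeff_mk]
  apply Finset.sum_subset
  · exact Finset.range_subset_range.mpr (by omega)
  · intro k hk hk'
    have hnk : n < k := by
      simp only [Finset.mem_range] at hk'
      omega
    rw [coeff_S_pow_eq_zero hnk, mul_zero]

lemma deriv_T (N : ℕ) :
    d⁄dX ℚ (T (N + 1)) = d⁄dX ℚ toddNeperSeries * T N := by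
  rw [T, map_sum, Finset.sum_range_succ', T, Finset.mul_sum]
  have h0 : d⁄dX ℚ (PowerSeries.C (R := ℚ) (1 / ((0 : ℕ).factorial : ℚ)) * toddNeperSeries ^ 0) = 0 := by
    simp
  rw [h0, add_zero]
  apply Finset.sum_congr rfl
  intro i _
  have hfac : (PowerSeries.C (R := ℚ) (1 / ((i + 1).factorial : ℚ))) * ((i : ℚ⟦X⟧) + 1)
      = PowerSeries.C (R := ℚ) (1 / (i.factorial : ℚ)) := by
    have hcast : ((i : ℚ⟦X⟧) + 1) = PowerSeries.C (R := ℚ) ((i : ℚ) + 1) := by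
      rw [map_add, map_natCast, map_one]
    rw [hcast, ← map_mul]
    congr 1
    have h1 : ((i + 1).factorial : ℚ) = ((i : ℚ) + 1) * (i.factorial : ℚ) := by
      rw [Nat.factorial_succ]; push_cast; ring
    have h2 : ((i + 1).factorial : ℚ) ≠ 0 := Nat.cast_ne_zero.mpr (Nat.factorial_ne_zero _)
    have h3 : (i.factorial : ℚ) ≠ 0 := Nat.cast_ne_zero.mpr (Nat.factorial_ne_zero _)
    field_simp [h1]
    exact h1.symm
  have hleib : d⁄dX ℚ (PowerSeries.C (R := ℚ) (1 / ((i + 1).factorial : ℚ)) * toddNeperSeries ^ (i + 1))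
      = PowerSeries.C (R := ℚ) (1 / ((i + 1).factorial : ℚ)) * d⁄dX ℚ (toddNeperSeries ^ (i + 1)) := by
    rw [Derivation.leibniz, derivative_C, smul_zero, add_zero, smul_eq_mul]
  rw [hleib, Derivation.leibniz_pow]
  simp only [Nat.add_sub_cancel, smul_eq_mul, nsmul_eq_mul]
  push_cast
  rw [← hfac]
  ring

lemma deriv_E :
    d⁄dX ℚ expToddNeperSeries = d⁄dX ℚ toddNeperSeries * expToddNeperSeries := by
  ext n
  rw [PowerSeries.coeff_derivative, coeff_E_eq (n + 1) (n + 1) le_rfl,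
    ← PowerSeries.coeff_derivative, deriv_T]
  rw [PowerSeries.coeff_mul, PowerSeries.coeff_mul]
  apply Finset.sum_congr rfl
  intro p hp
  rw [Finset.HasAntidiagonal.mem_antidiagonal] at hp
  rw [coeff_E_eq p.2 n (by omega)]

lemma X_mul_deriv_S :
    PowerSeries.X * d⁄dX ℚ toddNeperSeries = 1 - bernoulliPowerSeries ℚ := by
  ext n
  cases n with
  | zero =>
    simp [bernoulliPowerSeries, PowerSeries.coeff_mul]
  | succ n =>
    rw [PowerSeries.coeff_succ_X_mul, PowerSeries.coeff_derivative]
    rw [map_sub, bernoulliPowerSeries, PowerSeries.coeff_mk, PowerSeries.coeff_one,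
      if_neg (Nat.succ_ne_zero n)]
    simp only [toddNeperSeries, PowerSeries.coeff_mk, if_neg (Nat.succ_ne_zero n)]
    have h2 : ((n + 1).factorial : ℚ) ≠ 0 := Nat.cast_ne_zero.mpr (Nat.factorial_ne_zero _)
    have h3 : ((n : ℚ) + 1) ≠ 0 := by positivity
    push_cast
    field_simp
    ring_nf
    simp

lemma eneg_eq : (PowerSeries.mk fun k => ((-1 : ℚ) ^ k / (k.factorial : ℚ)))
    = PowerSeries.evalNegHom (PowerSeries.exp ℚ) := by
  ext n
  rw [PowerSeries.coeff_mk]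
  rw [show (PowerSeries.evalNegHom : ℚ⟦X⟧ →+* ℚ⟦X⟧) = PowerSeries.rescale (-1 : ℚ) from rfl]
  rw [PowerSeries.coeff_rescale, PowerSeries.coeff_exp]
  simp [div_eq_mul_inv]

lemma deriv_eneg :
    d⁄dX ℚ (PowerSeries.evalNegHom (PowerSeries.exp ℚ))
      = -(PowerSeries.evalNegHom (PowerSeries.exp ℚ)) := by
  rw [← eneg_eq]
  ext n
  rw [PowerSeries.coeff_derivative, map_neg, PowerSeries.coeff_mk, PowerSeries.coeff_mk]
  have h2 : ((n + 1).factorial : ℚ) ≠ 0 := Nat.cast_ne_zero.mpr (Nat.factorial_ne_zero _)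
  have h3 : (n.factorial : ℚ) ≠ 0 := Nat.cast_ne_zero.mpr (Nat.factorial_ne_zero _)
  have h1 : ((n + 1).factorial : ℚ) = ((n : ℚ) + 1) * (n.factorial : ℚ) := by
    rw [Nat.factorial_succ]; push_cast; ring
  rw [pow_succ]
  field_simp [h1]
  ring_nf
  rw [add_comm 1 n, h1]
  ring

lemma bern_eneg : bernoulliPowerSeries ℚ * (1 - PowerSeries.evalNegHom (PowerSeries.exp ℚ))
    = PowerSeries.X * PowerSeries.evalNegHom (PowerSeries.exp ℚ) := by
  have h2 : PowerSeries.exp ℚ * PowerSeries.evalNegHom (PowerSeries.exp ℚ) = 1 :=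
    PowerSeries.exp_mul_exp_neg_eq_one (A := ℚ)
  have key : (1 : ℚ⟦X⟧) - PowerSeries.evalNegHom (PowerSeries.exp ℚ)
      = (PowerSeries.exp ℚ - 1) * PowerSeries.evalNegHom (PowerSeries.exp ℚ) := by
    rw [sub_mul, one_mul, h2]
  rw [key, ← mul_assoc, bernoulliPowerSeries_mul_exp_sub_one]

end ToddAux

/-- in `ℚ⟦X⟧` one has `(1 − exp(−X))·exp(S) = X` where
`S = ∑_{n≥1} (−Bₙ/n)·Xⁿ/n!`; i.e. `log (X/(1 − e^{−X}))` has exponential generating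
coefficients `−Bₙ/n`, the nepers of the Todd orientation. -/
theorem todd_neper_identity :
    (1 - PowerSeries.mk fun k => ((-1 : ℚ) ^ k / (k.factorial : ℚ))) *
        expToddNeperSeries = PowerSeries.X := by
  rw [ToddAux.eneg_eq]
  set eneg : ℚ⟦X⟧ := PowerSeries.evalNegHom (PowerSeries.exp ℚ) with heneg
  set E : ℚ⟦X⟧ := expToddNeperSeries with hE
  set S : ℚ⟦X⟧ := toddNeperSeries with hS
  set F : ℚ⟦X⟧ := (1 - eneg) * E with hF
  have hdF : d⁄dX ℚ F = (1 - eneg) * (d⁄dX ℚ S * E) + E * eneg := by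
    rw [hF, Derivation.leibniz, smul_eq_mul, smul_eq_mul, ToddAux.deriv_E, map_sub,
      Derivation.map_one_eq_zero, ToddAux.deriv_eneg]
    ring
  have hXF : PowerSeries.X * d⁄dX ℚ F = F := by
    have step1 : PowerSeries.X * d⁄dX ℚ F
        = (PowerSeries.X * d⁄dX ℚ S) * ((1 - eneg) * E) + (PowerSeries.X * eneg) * E := by
      rw [hdF]; ring
    rw [step1, ToddAux.X_mul_deriv_S, ← ToddAux.bern_eneg]
    rw [hF]
    ring
  have hE0 : PowerSeries.coeff (R := ℚ) 0 E = 1 := by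
    rw [hE, expToddNeperSeries, PowerSeries.coeff_mk]
    simp
  have heneg0 : PowerSeries.coeff (R := ℚ) 0 eneg = 1 := by
    rw [heneg, ← ToddAux.eneg_eq, PowerSeries.coeff_mk]
    simp
  have heneg1 : PowerSeries.coeff (R := ℚ) 1 eneg = -1 := by
    rw [heneg, ← ToddAux.eneg_eq, PowerSeries.coeff_mk]
    simp
  have hC : PowerSeries.constantCoeff (R := ℚ) eneg = 1 := by
    rw [← PowerSeries.coeff_zero_eq_constantCoeff_apply]; exact heneg0
  ext n
  match n with
  | 0 =>
    have h00 : PowerSeries.coeff (R := ℚ) 0 (1 - eneg) = 0 := by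
      rw [map_sub, heneg0]; simp
    rw [hF, PowerSeries.coeff_mul]
    simp [h00, hC]
  | 1 =>
    rw [hF, PowerSeries.coeff_mul, Finset.Nat.sum_antidiagonal_eq_sum_range_succ_mk]
    rw [Finset.sum_range_succ, Finset.sum_range_one]
    simp [heneg0, heneg1, hE0, hC]
  | (n + 2) =>
    have hc := congrArg (PowerSeries.coeff (R := ℚ) (n + 2)) hXF
    rw [PowerSeries.coeff_succ_X_mul, PowerSeries.coeff_derivative] at hc
    set c : ℚ := PowerSeries.coeff (R := ℚ) (n + 2) F with hcdef
    have hzero : c = 0 := by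
      have h1 : c * ((n : ℚ) + 1 + 1) = c := by
        push_cast at hc
        linarith [hc]
      have h2 : c * ((n : ℚ) + 1) = 0 := by linarith
      have h3 : ((n : ℚ) + 1) ≠ 0 := by positivity
      exact (mul_eq_zero.mp h2).resolve_right h3
    rw [hzero, PowerSeries.coeff_X, if_neg (by omega)]

end
end

section
/- In the formal power series ring ℚ⟦q, x⟧ in two variables, set u := exp(−x) (a unit with inverse exp(x)) and T := ∑_{n≥1} (2/(2n)!)·( ∑_{j≥1} σ_{2n−1}(j)·q^j )·x^{2n}. Then the family of units ( (1 − q^j u)(1 − q^j u^{−1})·(1 − q^j)^{−2} )_{j≥1} is multipliable (the j-th factor is congruent to 1 modulo q^j, so finite partial products converge coefficientwise), and ∏_{j=1}^∞ (1 − q^j u)(1 − q^j u^{−1})·(1 − q^j)^{−2} = ∑_{k≥0} (−T)^k/k!. Equivalently, the formal logarithm of the left-hand side equals −2·∑_{n≥1} ( ∑_{j≥1} σ_{2n−1}(j)·q^j )·x^{2n}/(2n)!. -/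
noncomputable section

/-- We model `ℚ⟦q,x⟧` as `ℚ⟦q⟧⟦x⟧`: power series in `x` whose coefficients are power
series in `q`. -/
abbrev QQX : Type := PowerSeries (PowerSeries ℚ)

/-- `u = exp(−x) ∈ ℚ⟦q,x⟧`. -/
def uSeries : QQX :=
  PowerSeries.mk fun k => PowerSeries.C ((-1 : ℚ) ^ k / (k.factorial : ℚ))

/-- `u⁻¹ = exp(x) ∈ ℚ⟦q,x⟧` (the inverse of the unit `u`). -/
def uInvSeries : QQX :=
  PowerSeries.mk fun k => PowerSeries.C ((1 : ℚ) / (k.factorial : ℚ))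

/-- The variable `q`, viewed in `ℚ⟦q,x⟧`. -/
def qSeries : QQX := PowerSeries.C PowerSeries.X

/-- `T = ∑_{n≥1} (2/(2n)!)·(∑_{j≥1} σ_{2n−1}(j)·q^j)·x^{2n}`, with
`σ_k(j) = ∑_{d ∣ j} d^k`. -/
def TSeries : QQX :=
  PowerSeries.mk fun k =>
    if k = 0 then 0
    else if Even k then
      (2 / (k.factorial : ℚ)) • PowerSeries.mk fun j => ∑ d ∈ j.divisors, (d : ℚ) ^ (k - 1)
    else 0

/-- The formal exponential `∑_{i≥0} (−T)^i/i!` of `−T` (well defined since `T` has zero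
constant term in `x`: only `i ≤ k` contribute to the coefficient of `x^k`). -/
def expNegTSeries : QQX :=
  PowerSeries.mk fun k =>
    ∑ i ∈ Finset.range (k + 1),
      (1 / (i.factorial : ℚ)) • PowerSeries.coeff k ((-TSeries) ^ i)

/-- The `j`-th factor `(1 − q^j·u)·(1 − q^j·u⁻¹)·(1 − q^j)⁻²` of the infinite product. -/
def wittenFactor (j : ℕ) : QQX :=
  (1 - qSeries ^ j * uSeries) * (1 - qSeries ^ j * uInvSeries) *
    Ring.inverse ((1 - qSeries ^ j) ^ 2)

open PowerSeries

set_option linter.unusedSectionVars false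

namespace WittenAux

/-! ### Generic lemmas about `derivativeFun` over a commutative ring / ℚ-algebra -/

section Generic

variable {A : Type*} [CommRing A]

local notation "DD" => PowerSeries.derivativeFun

lemma coeff_derivativeFun (f : A⟦X⟧) (n : ℕ) :
    coeff n (DD f) = coeff (n + 1) f * (n + 1) := coeff_derivative f n

lemma derivativeFun_C (r : A) : DD (C r) = 0 := derivative_C

lemma dd_mul (f g : A⟦X⟧) : DD (f * g) = f * DD g + g * DD f := by
  rw [derivativeFun_mul, smul_eq_mul, smul_eq_mul]

lemma dd_zero : DD (0 : A⟦X⟧) = 0 := by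
  ext n
  simp [coeff_derivativeFun]

lemma dd_one : DD (1 : A⟦X⟧) = 0 := derivativeFun_one

lemma dd_neg (f : A⟦X⟧) : DD (-f) = -DD f := by
  ext n
  simp [coeff_derivativeFun]

lemma dd_sub (f g : A⟦X⟧) : DD (f - g) = DD f - DD g := by
  rw [sub_eq_add_neg, derivativeFun_add, dd_neg, sub_eq_add_neg]

lemma dd_sum {ι : Type*} (s : Finset ι) (f : ι → A⟦X⟧) :
    DD (∑ j ∈ s, f j) = ∑ j ∈ s, DD (f j) := by
  classical
  induction s using Finset.induction_on with
  | empty => simp [dd_zero]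
  | @insert a s' ha ih =>
      rw [Finset.sum_insert ha, Finset.sum_insert ha, derivativeFun_add, ih]

lemma dd_pow (f : A⟦X⟧) (m : ℕ) : DD (f ^ (m + 1)) = ((m + 1 : ℕ) : A⟦X⟧) * f ^ m * DD f := by
  induction m with
  | zero => simp [dd_mul, dd_one]
  | succ m ih =>
      rw [pow_succ, dd_mul, ih]
      push_cast
      ring

lemma coeff_pow_zero {S : A⟦X⟧} (hS : constantCoeff S = 0) {k i : ℕ} (h : k < i) :
    coeff k (S ^ i) = 0 := by
  obtain ⟨g, rfl⟩ := PowerSeries.X_dvd_iff.mpr hS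
  rw [mul_pow, coeff_X_pow_mul', if_neg (by omega)]

lemma dd_map {B : Type*} [CommRing B] (π : A →+* B) (f : A⟦X⟧) :
    DD (PowerSeries.map π f) = PowerSeries.map π (DD f) := by
  ext n
  simp [coeff_derivativeFun, coeff_map]

lemma dd_prod {ι : Type*} (s : Finset ι) (F w : ι → A⟦X⟧)
    (h : ∀ j ∈ s, DD (F j) = w j * F j) :
    DD (∏ j ∈ s, F j) = (∑ j ∈ s, w j) * ∏ j ∈ s, F j := by
  classical
  induction s using Finset.induction_on with
  | empty => simp [dd_one]
  | @insert a s' ha ih =>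
      rw [Finset.prod_insert ha, Finset.sum_insert ha, dd_mul,
        ih (fun j hj => h j (Finset.mem_insert_of_mem hj)), h a (Finset.mem_insert_self a s')]
      ring

variable [Algebra ℚ A]

lemma isUnit_nat_succ (n : ℕ) : IsUnit ((n + 1 : ℕ) : A) := by
  have h : ((n + 1 : ℕ) : A) = algebraMap ℚ A ((n + 1 : ℕ) : ℚ) := by
    rw [map_natCast]
  rw [h]
  exact IsUnit.map (algebraMap ℚ A) (isUnit_iff_ne_zero.mpr (by positivity))

lemma ode_unique {W F G : A⟦X⟧} (hF : DD F = W * F) (hG : DD G = W * G)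
    (h0 : constantCoeff F = constantCoeff G) : F = G := by
  ext n
  induction n using Nat.strong_induction_on with
  | _ n ih =>
    match n with
    | 0 => simpa using h0
    | Nat.succ n =>
      have h1 : coeff n (DD F) = coeff n (DD G) := by
        rw [hF, hG, coeff_mul, coeff_mul]
        refine Finset.sum_congr rfl fun p hp => ?_
        rw [ih p.2 (by have := Finset.HasAntidiagonal.antidiagonal.snd_le hp; omega)]
      rw [coeff_derivativeFun, coeff_derivativeFun] at h1
      have hu : IsUnit ((n + 1 : ℕ) : A) := isUnit_nat_succ n
      have h2 : ((n + 1 : ℕ) : A) = ((n : A) + 1) := by push_cast; ring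
      rw [← h2] at h1
      exact hu.mul_left_cancel (by
        rw [mul_comm ((n + 1 : ℕ) : A), mul_comm ((n + 1 : ℕ) : A), h1])

/-- Lambert series rearrangement with a nilpotent variable. -/
lemma lambert {N J : ℕ} (hJ : N ≤ J) (t : A) (ht : t ^ (N + 1) = 0)
    (g : ℕ → A) (hg0 : g 0 = 0) :
    ∑ j ∈ Finset.Icc 1 J, ∑ m ∈ Finset.range (N + 1), g m * t ^ (j * m) =
      ∑ s ∈ Finset.range (N + 1), (∑ d ∈ s.divisors, g d) * t ^ s := by
  classical
  have htpow : ∀ {r : ℕ}, N < r → t ^ r = 0 := by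
    intro r hr
    rw [show r = (N + 1) + (r - (N + 1)) by omega, pow_add, ht, zero_mul]
  -- rewrite RHS as a sigma-sum over divisorsAntidiagonal
  have hRHS : ∑ s ∈ Finset.range (N + 1), (∑ d ∈ s.divisors, g d) * t ^ s =
      ∑ x ∈ (Finset.range (N + 1)).sigma Nat.divisorsAntidiagonal, g x.2.1 * t ^ x.1 := by
    rw [Finset.sum_sigma]
    refine Finset.sum_congr rfl fun s _ => ?_
    rw [Finset.sum_mul]
    exact (Nat.sum_divisorsAntidiagonal (fun a b => g a * t ^ s)).symm
  rw [hRHS]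
  -- rewrite LHS as a sum over a product set, then restrict
  rw [← Finset.sum_product']
  set S : Finset (ℕ × ℕ) :=
    (Finset.Icc 1 J ×ˢ Finset.range (N + 1)).filter fun p => 1 ≤ p.2 ∧ p.1 * p.2 ≤ N with hS
  have hrestrict : ∑ p ∈ Finset.Icc 1 J ×ˢ Finset.range (N + 1), g p.2 * t ^ (p.1 * p.2) =
      ∑ p ∈ S, g p.2 * t ^ (p.1 * p.2) := by
    refine (Finset.sum_subset (Finset.filter_subset _ _) ?_).symm
    intro p hp hnp
    rw [Finset.mem_filter] at hnp
    push_neg at hnp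
    by_cases h2 : 1 ≤ p.2
    · rw [htpow (by have := hnp hp h2; omega), mul_zero]
    · rw [show p.2 = 0 by omega, hg0, zero_mul]
  rw [hrestrict]
  refine Finset.sum_nbij' (fun p => ⟨p.1 * p.2, (p.2, p.1)⟩) (fun x => (x.2.2, x.2.1)) ?_ ?_ ?_ ?_ ?_
  · intro p hp
    rw [hS, Finset.mem_filter, Finset.mem_product, Finset.mem_Icc] at hp
    obtain ⟨⟨⟨h1, h2⟩, h3⟩, h4, h5⟩ := hp
    simp only [Finset.mem_sigma, Finset.mem_range, Nat.mem_divisorsAntidiagonal]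
    exact ⟨by omega, mul_comm p.2 p.1, Nat.mul_ne_zero (by omega) (by omega)⟩
  · intro x hx
    rw [Finset.mem_sigma, Finset.mem_range, Nat.mem_divisorsAntidiagonal] at hx
    obtain ⟨hx1, hx2, hx3⟩ := hx
    simp only [hS, Finset.mem_filter, Finset.mem_product, Finset.mem_Icc, Finset.mem_range]
    have h21 : 1 ≤ x.2.1 := by
      rcases Nat.eq_zero_or_pos x.2.1 with h | h
      · exfalso; apply hx3; rw [← hx2, h, zero_mul]
      · exact h
    have h22 : 1 ≤ x.2.2 := by
      rcases Nat.eq_zero_or_pos x.2.2 with h | h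
      · exfalso; apply hx3; rw [← hx2, h, mul_zero]
      · exact h
    have hle1 : x.2.1 ≤ x.1 := by
      rw [← hx2]; exact Nat.le_mul_of_pos_right _ h22
    have hle2 : x.2.2 ≤ x.1 := by
      rw [← hx2]; exact Nat.le_mul_of_pos_left _ h21
    refine ⟨⟨⟨h22, by omega⟩, by omega⟩, h21, by rw [mul_comm, hx2]; omega⟩
  · intro p hp; rfl
  · intro x hx
    rw [Finset.mem_sigma, Nat.mem_divisorsAntidiagonal] at hx
    obtain ⟨_, hx2, _⟩ := hx
    exact Sigma.ext (by simpa [mul_comm] using hx2) (by simp)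
  · intro p hp; rfl

end Generic

/-! ### Lemmas about the specific series in `ℚ⟦q,x⟧` -/

section QQXlem

local notation "DD" => PowerSeries.derivativeFun

lemma constantCoeff_T : constantCoeff TSeries = 0 := by
  rw [← coeff_zero_eq_constantCoeff_apply, TSeries, coeff_mk, if_pos rfl]

lemma constantCoeff_S : constantCoeff (-TSeries) = 0 := by
  rw [map_neg, constantCoeff_T, neg_zero]

/-- `ℚ → ℚ⟦q,x⟧` as a ring hom. -/
def CCh : ℚ →+* QQX := (C).comp (C)

lemma coeff_CCh_mul (a : ℚ) (f : QQX) (n : ℕ) :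
    coeff n (CCh a * f) = C a * coeff n f := by
  rw [CCh, RingHom.comp_apply, coeff_C_mul]

def EM (M : ℕ) : QQX := ∑ i ∈ Finset.range M, CCh (1 / (i.factorial : ℚ)) * (-TSeries) ^ i

lemma coeff_expNegT {k M : ℕ} (hk : k < M) :
    coeff k expNegTSeries = coeff k (EM M) := by
  rw [expNegTSeries, coeff_mk, EM, map_sum]
  simp only [coeff_CCh_mul, ← PowerSeries.smul_eq_C_mul]
  exact Finset.sum_subset (Finset.range_subset_range.mpr hk)
    (fun i _ hi => by rw [coeff_pow_zero constantCoeff_S (by simpa using hi), smul_zero])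

lemma dd_CCh_mul (a : ℚ) (f : QQX) : DD (CCh a * f) = CCh a * DD f := by
  rw [CCh, RingHom.comp_apply, dd_mul, derivativeFun_C, mul_zero, add_zero]

lemma derivative_EM (M : ℕ) : DD (EM (M + 1)) = DD (-TSeries) * EM M := by
  rw [EM, EM, dd_sum, Finset.sum_range_succ', Finset.mul_sum]
  have h0 : DD (CCh (1 / ((0 : ℕ).factorial : ℚ)) * (-TSeries) ^ 0) = 0 := by
    rw [dd_CCh_mul, pow_zero, dd_one, mul_zero]
  rw [h0, add_zero]
  refine Finset.sum_congr rfl fun i _ => ?_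
  rw [dd_CCh_mul, dd_pow]
  have hc : ((i + 1 : ℕ) : QQX) = CCh ((i + 1 : ℕ) : ℚ) := (map_natCast CCh (i + 1)).symm
  have harith : (1 / (((i + 1).factorial : ℚ))) * ((i + 1 : ℕ) : ℚ) = 1 / (i.factorial : ℚ) := by
    rw [Nat.factorial_succ]
    have h2 : ((i.factorial : ℚ)) ≠ 0 := Nat.cast_ne_zero.mpr i.factorial_ne_zero
    push_cast
    field_simp
  calc CCh (1 / (((i + 1).factorial : ℚ))) *
        (((i + 1 : ℕ) : QQX) * (-TSeries) ^ i * DD (-TSeries))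
      = (CCh (1 / (((i + 1).factorial : ℚ))) * CCh ((i + 1 : ℕ) : ℚ)) *
          ((-TSeries) ^ i * DD (-TSeries)) := by rw [hc]; ring
    _ = CCh (1 / (i.factorial : ℚ)) * ((-TSeries) ^ i * DD (-TSeries)) := by
          rw [← map_mul, harith]
    _ = DD (-TSeries) * (CCh (1 / (i.factorial : ℚ)) * (-TSeries) ^ i) := by ring

lemma derivative_expNegT : DD expNegTSeries = DD (-TSeries) * expNegTSeries := by
  refine PowerSeries.ext fun k => ?_
  rw [coeff_derivativeFun, coeff_expNegT (Nat.lt_succ_self (k + 1)), ← coeff_derivativeFun,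
    derivative_EM (k + 1), coeff_mul, coeff_mul]
  refine Finset.sum_congr rfl fun p hp => ?_
  rw [coeff_expNegT (Nat.lt_succ_of_le (Finset.HasAntidiagonal.antidiagonal.snd_le hp))]

lemma constantCoeff_expNegT : constantCoeff expNegTSeries = 1 := by
  rw [← coeff_zero_eq_constantCoeff_apply, expNegTSeries, coeff_mk]
  simp

lemma uSeries_eq : uSeries = PowerSeries.map (C) (rescale (-1 : ℚ) (PowerSeries.exp ℚ)) := by
  ext k
  rw [uSeries, coeff_mk, coeff_map, coeff_rescale, coeff_exp]
  simp [div_eq_mul_inv]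

lemma uInvSeries_eq : uInvSeries = PowerSeries.map (C) (PowerSeries.exp ℚ) := by
  ext k
  rw [uInvSeries, coeff_mk, coeff_map, coeff_exp]
  simp [div_eq_mul_inv]

lemma uSeries_pow (m : ℕ) :
    uSeries ^ m = PowerSeries.map (C) (rescale (-(m : ℚ)) (PowerSeries.exp ℚ)) := by
  rw [uSeries_eq, ← map_pow, ← map_pow, exp_pow_eq_rescale_exp, rescale_rescale]
  norm_num

lemma uInvSeries_pow (m : ℕ) :
    uInvSeries ^ m = PowerSeries.map (C) (rescale ((m : ℚ)) (PowerSeries.exp ℚ)) := by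
  rw [uInvSeries_eq, ← map_pow, exp_pow_eq_rescale_exp]

lemma coeff_uSeries_pow (m k : ℕ) :
    coeff k (uSeries ^ m) = C ((-(m : ℚ)) ^ k * (1 / (k.factorial : ℚ))) := by
  rw [uSeries_pow, coeff_map, coeff_rescale, coeff_exp]
  simp

lemma coeff_uInvSeries_pow (m k : ℕ) :
    coeff k (uInvSeries ^ m) = C (((m : ℚ)) ^ k * (1 / (k.factorial : ℚ))) := by
  rw [uInvSeries_pow, coeff_map, coeff_rescale, coeff_exp]
  simp

lemma dd_uSeries : DD uSeries = -uSeries := by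
  refine PowerSeries.ext fun k => ?_
  rw [coeff_derivativeFun, uSeries, map_neg, coeff_mk, coeff_mk]
  have hcast : ((k : PowerSeries ℚ) + 1) = C ((k : ℚ) + 1) := by
    rw [map_add, map_natCast, map_one]
  rw [hcast, ← map_mul, ← map_neg]
  congr 1
  rw [Nat.factorial_succ]
  have h1 : ((k : ℚ) + 1) ≠ 0 := by positivity
  have h2 : ((k.factorial : ℚ)) ≠ 0 := Nat.cast_ne_zero.mpr k.factorial_ne_zero
  push_cast
  field_simp
  ring

lemma dd_uInvSeries : DD uInvSeries = uInvSeries := by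
  refine PowerSeries.ext fun k => ?_
  rw [coeff_derivativeFun, uInvSeries, coeff_mk, coeff_mk]
  have hcast : ((k : PowerSeries ℚ) + 1) = C ((k : ℚ) + 1) := by
    rw [map_add, map_natCast, map_one]
  rw [hcast, ← map_mul]
  congr 1
  rw [Nat.factorial_succ]
  have h1 : ((k : ℚ) + 1) ≠ 0 := by positivity
  have h2 : ((k.factorial : ℚ)) ≠ 0 := Nat.cast_ne_zero.mpr k.factorial_ne_zero
  push_cast
  field_simp

lemma constantCoeff_uSeries : constantCoeff uSeries = 1 := by
  rw [← coeff_zero_eq_constantCoeff_apply, uSeries, coeff_mk]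
  simp

lemma constantCoeff_uInvSeries : constantCoeff uInvSeries = 1 := by
  rw [← coeff_zero_eq_constantCoeff_apply, uInvSeries, coeff_mk]
  simp

/-- The inverse of `(1 - q^j)²` in `ℚ⟦q⟧`. -/
def rInv (j : ℕ) : PowerSeries ℚ := Ring.inverse ((1 - PowerSeries.X ^ j) ^ 2)

lemma isUnit_one_sub_X_pow {j : ℕ} (hj : 1 ≤ j) :
    IsUnit ((1 - PowerSeries.X ^ j : PowerSeries ℚ)) := by
  rw [PowerSeries.isUnit_iff_constantCoeff]
  have : constantCoeff (PowerSeries.X ^ j : PowerSeries ℚ) = 0 := by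
    rw [map_pow, constantCoeff_X, zero_pow (by omega)]
  rw [map_sub, this, map_one, sub_zero]
  exact isUnit_one

lemma rInv_mul {j : ℕ} (hj : 1 ≤ j) :
    ((1 - PowerSeries.X ^ j) ^ 2 : PowerSeries ℚ) * rInv j = 1 :=
  Ring.mul_inverse_cancel _ ((isUnit_one_sub_X_pow hj).pow 2)

lemma wittenFactor_eq {j : ℕ} (hj : 1 ≤ j) :
    wittenFactor j = (1 - qSeries ^ j * uSeries) * (1 - qSeries ^ j * uInvSeries) *
      C (rInv j) := by
  rw [wittenFactor]
  congr 1
  have hCs : ((1 - qSeries ^ j) ^ 2 : QQX) =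
      C ((1 - PowerSeries.X ^ j) ^ 2) := by
    rw [qSeries, map_pow, map_sub, map_one, map_pow]
  have hmul : ((1 - qSeries ^ j) ^ 2 : QQX) * C (rInv j) = 1 := by
    rw [hCs, ← map_mul, rInv_mul hj, map_one]
  have hu : IsUnit ((1 - qSeries ^ j) ^ 2 : QQX) := IsUnit.of_mul_eq_one _ hmul
  calc Ring.inverse ((1 - qSeries ^ j) ^ 2 : QQX)
      = Ring.inverse ((1 - qSeries ^ j) ^ 2 : QQX) *
          (((1 - qSeries ^ j) ^ 2 : QQX) * C (rInv j)) := by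
        rw [hmul, mul_one]
    _ = (Ring.inverse ((1 - qSeries ^ j) ^ 2 : QQX) * ((1 - qSeries ^ j) ^ 2 : QQX)) *
          C (rInv j) := by ring
    _ = C (rInv j) := by rw [Ring.inverse_mul_cancel _ hu, one_mul]

lemma constantCoeff_wittenFactor {j : ℕ} (hj : 1 ≤ j) :
    constantCoeff (wittenFactor j) = 1 := by
  rw [wittenFactor_eq hj]
  have hq : constantCoeff qSeries = PowerSeries.X := by
    rw [qSeries, constantCoeff_C]
  simp only [map_mul, map_sub, map_pow, map_one, constantCoeff_C, constantCoeff_uSeries,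
    constantCoeff_uInvSeries, hq, mul_one]
  have h2 : (1 - PowerSeries.X ^ j : PowerSeries ℚ) * (1 - PowerSeries.X ^ j) * rInv j
      = (1 - PowerSeries.X ^ j) ^ 2 * rInv j := by ring
  rw [h2, rInv_mul hj]

end QQXlem

/-! ### The quotient ring `ℚ⟦q⟧/(q^{N+1})` and the main argument -/

section Quot

local notation "DD" => PowerSeries.derivativeFun

lemma dd_C_mul {A : Type*} [CommRing A] (c : A) (f : A⟦X⟧) :
    DD (C c * f) = C c * DD f := by
  rw [dd_mul, derivativeFun_C, mul_zero, add_zero]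

variable (N : ℕ)

def Iq : Ideal (PowerSeries ℚ) := Ideal.span {PowerSeries.X ^ (N + 1)}

abbrev Aq : Type := PowerSeries ℚ ⧸ Iq N

def prq : PowerSeries ℚ →+* Aq N := Ideal.Quotient.mk (Iq N)

def tq : Aq N := prq N PowerSeries.X

def phiq : QQX →+* PowerSeries (Aq N) := PowerSeries.map (prq N)

def psiq : ℚ →+* Aq N := (prq N).comp (C)

lemma tq_pow_eq_zero {r : ℕ} (hr : N < r) : tq N ^ r = 0 := by
  rw [tq, ← map_pow]
  have : (PowerSeries.X : PowerSeries ℚ) ^ r ∈ Iq N := by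
    rw [Iq, Ideal.mem_span_singleton]
    exact pow_dvd_pow _ (by omega)
  exact Ideal.Quotient.eq_zero_iff_mem.mpr this

lemma geom_nil {A : Type*} [CommRing A] (x : A) (hx : x ^ (N + 1) = 0) :
    (∑ m ∈ Finset.range (N + 1), x ^ m) * (1 - x) = 1 := by
  have h := geom_sum_mul x (N + 1)
  calc (∑ m ∈ Finset.range (N + 1), x ^ m) * (1 - x)
      = -((∑ m ∈ Finset.range (N + 1), x ^ m) * (x - 1)) := by ring
    _ = -(x ^ (N + 1) - 1) := by rw [h]
    _ = 1 := by rw [hx]; ring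

/-- The `x`-logarithmic derivative of the `j`-th factor, in the quotient. -/
def Ws (j : ℕ) : PowerSeries (Aq N) :=
  (∑ m ∈ Finset.range (N + 1), (C (tq N) ^ j * phiq N uSeries) ^ m) -
    (∑ m ∈ Finset.range (N + 1), (C (tq N) ^ j * phiq N uInvSeries) ^ m)

lemma phiq_C (r : PowerSeries ℚ) :
    phiq N (C r) = C (prq N r) := by
  ext n
  rw [phiq, coeff_map, coeff_C, coeff_C]
  split_ifs <;> simp

lemma phiq_q : phiq N qSeries = C (tq N) := by
  rw [qSeries, phiq_C, tq]

lemma nilp_a {j : ℕ} (hj : 1 ≤ j) (f : QQX) :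
    (C (tq N) ^ j * phiq N f) ^ (N + 1) = 0 := by
  rw [mul_pow, ← pow_mul, ← map_pow, tq_pow_eq_zero N
    (by have : N + 1 ≤ j * (N + 1) := Nat.le_mul_of_pos_left _ (by omega); omega),
    map_zero, zero_mul]

lemma dd_phiq_u : DD (phiq N uSeries) = -(phiq N uSeries) := by
  rw [phiq, dd_map, dd_uSeries, map_neg]

lemma dd_phiq_uInv : DD (phiq N uInvSeries) = phiq N uInvSeries := by
  rw [phiq, dd_map, dd_uInvSeries]

lemma dd_factor {j : ℕ} (hj : 1 ≤ j) :
    DD (phiq N (wittenFactor j)) = Ws N j * phiq N (wittenFactor j) := by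
  have hfac : phiq N (wittenFactor j) =
      (1 - C (tq N) ^ j * phiq N uSeries) *
        (1 - C (tq N) ^ j * phiq N uInvSeries) * C (prq N (rInv j)) := by
    rw [wittenFactor_eq hj]
    simp only [map_mul, map_sub, map_pow, map_one, phiq_q, phiq_C]
  set a : PowerSeries (Aq N) := C (tq N) ^ j * phiq N uSeries with ha
  set b : PowerSeries (Aq N) := C (tq N) ^ j * phiq N uInvSeries with hb
  have hDa : DD a = -a := by
    rw [ha, ← map_pow, dd_C_mul, dd_phiq_u, map_pow]
    ring
  have hDb : DD b = b := by
    rw [hb, ← map_pow, dd_C_mul, dd_phiq_uInv, map_pow]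
  have hDg : DD ((1 - a) * (1 - b)) = a - b := by
    rw [dd_mul, dd_sub, dd_sub, dd_one, hDa, hDb]
    ring
  have hga : (∑ m ∈ Finset.range (N + 1), a ^ m) * (1 - a) = 1 :=
    geom_nil N a (nilp_a N hj uSeries)
  have hgb : (∑ m ∈ Finset.range (N + 1), b ^ m) * (1 - b) = 1 :=
    geom_nil N b (nilp_a N hj uInvSeries)
  have hW : Ws N j * ((1 - a) * (1 - b)) = a - b := by
    rw [Ws]
    calc ((∑ m ∈ Finset.range (N + 1), a ^ m) - (∑ m ∈ Finset.range (N + 1), b ^ m)) *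
          ((1 - a) * (1 - b))
        = ((∑ m ∈ Finset.range (N + 1), a ^ m) * (1 - a)) * (1 - b) -
            ((∑ m ∈ Finset.range (N + 1), b ^ m) * (1 - b)) * (1 - a) := by ring
      _ = (1 - b) - (1 - a) := by rw [hga, hgb, one_mul, one_mul]
      _ = a - b := by ring
  rw [hfac]
  have hstep : DD ((1 - a) * (1 - b) * C (prq N (rInv j))) =
      C (prq N (rInv j)) * DD ((1 - a) * (1 - b)) := by
    rw [mul_comm ((1 - a) * (1 - b)) (C (prq N (rInv j))), dd_C_mul]
  rw [hstep, hDg, ← hW]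
  ring

lemma constantCoeff_phiq_wf {j : ℕ} (hj : 1 ≤ j) :
    constantCoeff (phiq N (wittenFactor j)) = 1 := by
  rw [← coeff_zero_eq_constantCoeff_apply, phiq, coeff_map,
    coeff_zero_eq_constantCoeff_apply, constantCoeff_wittenFactor hj, map_one]

lemma constantCoeff_phiq_exp : constantCoeff (phiq N expNegTSeries) = 1 := by
  rw [← coeff_zero_eq_constantCoeff_apply, phiq, coeff_map,
    coeff_zero_eq_constantCoeff_apply, constantCoeff_expNegT, map_one]

end Quot

section Main

local notation "DD" => PowerSeries.derivativeFun

lemma coeff_dd_negT (k : ℕ) :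
    coeff k (DD (-TSeries)) =
      if Even k then 0
      else -(C (2 / (k.factorial : ℚ)) *
        PowerSeries.mk fun s => ∑ d ∈ s.divisors, (d : ℚ) ^ k) := by
  rw [dd_neg, map_neg, coeff_derivativeFun, TSeries, coeff_mk, if_neg (Nat.succ_ne_zero k)]
  by_cases hk : Even k
  · rw [if_neg (by simpa [Nat.even_add_one] using hk), if_pos hk, zero_mul, neg_zero]
  · rw [if_pos (Nat.even_add_one.mpr hk), if_neg hk]
    congr 1
    rw [Nat.add_sub_cancel, PowerSeries.smul_eq_C_mul]
    have hcast : ((k : PowerSeries ℚ) + 1) = C ((k : ℚ) + 1) := by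
      rw [map_add, map_natCast, map_one]
    rw [hcast, mul_comm (C (2 / ((k + 1).factorial : ℚ)) * _) (C ((k : ℚ) + 1)),
      ← mul_assoc, ← map_mul]
    congr 2
    rw [Nat.factorial_succ]
    have h2 : ((k.factorial : ℚ)) ≠ 0 := Nat.cast_ne_zero.mpr k.factorial_ne_zero
    have h1 : ((k : ℚ) + 1) ≠ 0 := by positivity
    push_cast
    field_simp

variable (N : ℕ)

lemma prq_eq_sum (f : PowerSeries ℚ) :
    prq N f = ∑ s ∈ Finset.range (N + 1), psiq N (coeff s f) * tq N ^ s := by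
  have hdvd : (PowerSeries.X : PowerSeries ℚ) ^ (N + 1) ∣
      f - ∑ s ∈ Finset.range (N + 1), C (coeff s f) * PowerSeries.X ^ s := by
    rw [PowerSeries.X_pow_dvd_iff]
    intro m hm
    rw [map_sub]
    have hcs : coeff m (∑ s ∈ Finset.range (N + 1), C (coeff s f) * PowerSeries.X ^ s)
        = coeff m f := by
      rw [map_sum]
      simp only [coeff_C_mul, coeff_X_pow, mul_ite, mul_one, mul_zero]
      rw [Finset.sum_ite_eq (Finset.range (N + 1)) m (fun s => coeff s f),
        if_pos (Finset.mem_range.mpr hm)]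
    rw [hcs, sub_self]
  have hmem : f - ∑ s ∈ Finset.range (N + 1), C (coeff s f) * PowerSeries.X ^ s ∈ Iq N := by
    rw [Iq, Ideal.mem_span_singleton]
    exact hdvd
  have h1 : prq N f =
      prq N (∑ s ∈ Finset.range (N + 1), C (coeff s f) * PowerSeries.X ^ s) :=
    Ideal.Quotient.eq.mpr hmem
  rw [h1, map_sum]
  exact Finset.sum_congr rfl fun s _ => by rw [map_mul, map_pow]; rfl

lemma sum_Ws {J : ℕ} (hJ : N ≤ J) :
    ∑ j ∈ Finset.Icc 1 J, Ws N j = phiq N (DD (-TSeries)) := by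
  refine PowerSeries.ext fun k => ?_
  have hR : coeff k (phiq N (DD (-TSeries))) =
      prq N (coeff k (DD (-TSeries))) := by
    rw [phiq, coeff_map]
  have hcoeff : ∀ (j m : ℕ) (f : QQX),
      coeff k ((C (tq N) ^ j * phiq N f) ^ m) =
        tq N ^ (j * m) * prq N (coeff k (f ^ m)) := by
    intro j m f
    have : (C (tq N) ^ j * phiq N f) ^ m =
        C (tq N ^ (j * m)) * phiq N (f ^ m) := by
      rw [mul_pow, map_pow, pow_mul, map_pow]
    rw [this, coeff_C_mul, phiq, coeff_map]
  have hWs : ∀ j, coeff k (Ws N j) =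
      ∑ m ∈ Finset.range (N + 1),
        (psiq N ((-(m : ℚ)) ^ k * (1 / (k.factorial : ℚ))) -
          psiq N (((m : ℚ)) ^ k * (1 / (k.factorial : ℚ)))) * tq N ^ (j * m) := by
    intro j
    rw [Ws, map_sub, map_sum, map_sum, ← Finset.sum_sub_distrib]
    refine Finset.sum_congr rfl fun m _ => ?_
    rw [hcoeff j m uSeries, hcoeff j m uInvSeries, coeff_uSeries_pow, coeff_uInvSeries_pow]
    have h1 : prq N (C ((-(m : ℚ)) ^ k * (1 / (k.factorial : ℚ)))) =
        psiq N ((-(m : ℚ)) ^ k * (1 / (k.factorial : ℚ))) := rfl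
    have h2 : prq N (C (((m : ℚ)) ^ k * (1 / (k.factorial : ℚ)))) =
        psiq N (((m : ℚ)) ^ k * (1 / (k.factorial : ℚ))) := rfl
    rw [h1, h2]
    ring
  rw [map_sum, hR, coeff_dd_negT]
  by_cases hk : Even k
  · rw [if_pos hk, map_zero]
    refine Finset.sum_eq_zero fun j _ => ?_
    rw [hWs j]
    refine Finset.sum_eq_zero fun m _ => ?_
    rw [hk.neg_pow, sub_self, zero_mul]
  · rw [if_neg hk]
    have hodd : Odd k := Nat.odd_iff.mpr (Nat.not_even_iff.mp hk)
    have hkne : k ≠ 0 := by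
      rintro rfl
      exact hk Even.zero
    -- right hand side
    rw [map_neg, map_mul]
    have hCc : prq N (C (2 / (k.factorial : ℚ))) = psiq N (2 / (k.factorial : ℚ)) := rfl
    rw [hCc, prq_eq_sum]
    have hσ : ∀ s : ℕ, psiq N (coeff s (PowerSeries.mk fun s => ∑ d ∈ s.divisors, (d : ℚ) ^ k))
        = ∑ d ∈ s.divisors, psiq N ((d : ℚ) ^ k) := by
      intro s
      rw [coeff_mk, map_sum]
    -- left hand side
    have hL : ∑ j ∈ Finset.Icc 1 J, coeff k (Ws N j) =
        -(psiq N (2 / (k.factorial : ℚ)) *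
          ∑ j ∈ Finset.Icc 1 J, ∑ m ∈ Finset.range (N + 1),
            psiq N ((m : ℚ) ^ k) * tq N ^ (j * m)) := by
      rw [Finset.mul_sum, ← Finset.sum_neg_distrib]
      refine Finset.sum_congr rfl fun j _ => ?_
      rw [hWs j, Finset.mul_sum, ← Finset.sum_neg_distrib]
      refine Finset.sum_congr rfl fun m _ => ?_
      have hterm : (-(m : ℚ)) ^ k * (1 / (k.factorial : ℚ)) -
          (m : ℚ) ^ k * (1 / (k.factorial : ℚ)) =
            -(2 / (k.factorial : ℚ) * ((m : ℚ) ^ k)) := by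
        rw [hodd.neg_pow]
        ring
      rw [← map_sub, hterm, map_neg, map_mul]
      ring
    rw [hL, lambert hJ (tq N) (tq_pow_eq_zero N (Nat.lt_succ_self N))
      (fun m => psiq N ((m : ℚ) ^ k)) (by
        show psiq N (((0 : ℕ) : ℚ) ^ k) = 0
        rw [Nat.cast_zero, zero_pow hkne, map_zero])]
    congr 1
    congr 1
    refine Finset.sum_congr rfl fun s _ => ?_
    rw [hσ s]

end Main

lemma prq_eq_iff (N : ℕ) {a b : PowerSeries ℚ} : prq N a = prq N b ↔ a - b ∈ Iq N :=
  Ideal.Quotient.eq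

end WittenAux

/-- in `ℚ⟦q,x⟧`, the family `((1 − qʲu)(1 − qʲu⁻¹)(1 − qʲ)⁻²)_{j≥1}` is
multipliable in the sense that its finite partial products converge coefficientwise, with
limit `exp(−T) = ∑_{i≥0} (−T)^i/i!`: for every coefficient (extracted first in `x`, then
in `q`) the partial products over `1 ≤ j ≤ J` eventually equal the corresponding
coefficient of `exp(−T)`. -/
theorem witten_neper_product :
    ∀ k N : ℕ, ∃ J0 : ℕ, ∀ J : ℕ, J0 ≤ J →
      PowerSeries.coeff N
          (PowerSeries.coeff k (∏ j ∈ Finset.Icc 1 J, wittenFactor j)) =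
        PowerSeries.coeff N
          (PowerSeries.coeff k expNegTSeries) := by
  intro k N
  refine ⟨N, fun J hJ => ?_⟩
  have hFprod : WittenAux.phiq N (∏ j ∈ Finset.Icc 1 J, wittenFactor j) =
      ∏ j ∈ Finset.Icc 1 J, WittenAux.phiq N (wittenFactor j) := map_prod _ _ _
  have hsuf : WittenAux.phiq N (∏ j ∈ Finset.Icc 1 J, wittenFactor j) =
      WittenAux.phiq N expNegTSeries := by
    refine WittenAux.ode_unique (W := ∑ j ∈ Finset.Icc 1 J, WittenAux.Ws N j) ?_ ?_ ?_
    · rw [hFprod]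
      exact WittenAux.dd_prod _ _ _ fun j hj =>
        WittenAux.dd_factor N (Finset.mem_Icc.mp hj).1
    · rw [WittenAux.phiq, WittenAux.dd_map, ← WittenAux.phiq, WittenAux.derivative_expNegT,
        map_mul, WittenAux.sum_Ws N hJ]
    · rw [hFprod, map_prod, WittenAux.constantCoeff_phiq_exp]
      refine Finset.prod_eq_one fun j hj => ?_
      exact WittenAux.constantCoeff_phiq_wf N (Finset.mem_Icc.mp hj).1
  have h1 : WittenAux.prq N
        (PowerSeries.coeff k (∏ j ∈ Finset.Icc 1 J, wittenFactor j)) =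
      WittenAux.prq N (PowerSeries.coeff k expNegTSeries) := by
    have h := congrArg (PowerSeries.coeff k) hsuf
    simpa only [WittenAux.phiq, PowerSeries.coeff_map] using h
  have h2 : (PowerSeries.X : PowerSeries ℚ) ^ (N + 1) ∣
      PowerSeries.coeff k (∏ j ∈ Finset.Icc 1 J, wittenFactor j) -
        PowerSeries.coeff k expNegTSeries := by
    rw [← Ideal.mem_span_singleton, ← WittenAux.Iq]
    exact (WittenAux.prq_eq_iff N).mp h1
  have h3 := (PowerSeries.X_pow_dvd_iff.mp h2) N (Nat.lt_succ_self N)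
  rw [map_sub] at h3
  exact sub_eq_zero.mp h3

end
end

section
/- Let p be an odd prime and let c ∈ ℤ_p^× with c ≠ 1 and c ≠ −1. For j ≥ 0 set a_j := (1 − c^{(p−1)p^j})·(1 − p^{(p−1)p^j − 1})·(−B_{(p−1)p^j}/((p−1)p^j)) ∈ ℚ_p. Then each a_j lies in ℤ_p, for all j' ≥ j ≥ 0 one has a_{j'} − a_j ∈ p^{j+1}·ℤ_p, and consequently the sequence (a_j)_{j≥0} converges in ℤ_p. -/
open Finset Filter Topology PadicInt

namespace MazurAux

variable {p : ℕ} [hp : Fact p.Prime]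

/-- Uniqueness of `appr`. -/
theorem appr_unique (x : ℤ_[p]) (m b : ℕ) (hb : b < p ^ m)
    (hd : x - (b : ℤ_[p]) ∈ Ideal.span {(p : ℤ_[p]) ^ m}) : x.appr m = b := by
  have h1 := PadicInt.appr_spec m x
  have h2 := PadicInt.zmod_congr_of_sub_mem_span m x (x.appr m) b h1 hd
  have h3 : ((x.appr m : ZMod (p ^ m))).val = ((b : ZMod (p ^ m))).val := by rw [h2]
  haveI : NeZero (p ^ m) := ⟨pow_ne_zero _ hp.out.ne_zero⟩
  rwa [ZMod.val_natCast_of_lt (PadicInt.appr_lt x m), ZMod.val_natCast_of_lt hb] at h3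

noncomputable def s (c : ℤ_[p]ˣ) (m a : ℕ) : ℕ :=
  PadicInt.appr ((↑c⁻¹ : ℤ_[p]) * (a : ℤ_[p])) m

theorem s_lt (c : ℤ_[p]ˣ) (m a : ℕ) : s c m a < p ^ m := PadicInt.appr_lt _ m

theorem s_spec (c : ℤ_[p]ˣ) (m a : ℕ) :
    ∃ z : ℤ_[p], (↑c⁻¹ : ℤ_[p]) * (a : ℤ_[p]) - (s c m a : ℤ_[p]) = (p : ℤ_[p]) ^ m * z := by
  have h1 := PadicInt.appr_spec m ((↑c⁻¹ : ℤ_[p]) * (a : ℤ_[p]))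
  rwa [Ideal.mem_span_singleton] at h1

theorem s_s (c : ℤ_[p]ˣ) (m b : ℕ) (hb : b < p ^ m) : s c m (s c⁻¹ m b) = b := by
  obtain ⟨z, hz⟩ := s_spec c⁻¹ m b
  rw [inv_inv] at hz
  apply appr_unique _ _ _ hb
  rw [Ideal.mem_span_singleton]
  have hcc : (↑c⁻¹ : ℤ_[p]) * (↑c : ℤ_[p]) = 1 := by
    rw [← Units.val_mul]; simp
  exact ⟨-((↑c⁻¹ : ℤ_[p]) * z), by linear_combination -(↑c⁻¹ : ℤ_[p]) * hz + (b : ℤ_[p]) * hcc⟩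

end MazurAux

namespace MazurAux
variable {p : ℕ} [hp : Fact p.Prime]

theorem norm1_add {x y : ℚ_[p]} (hx : ‖x‖ ≤ 1) (hy : ‖y‖ ≤ 1) : ‖x + y‖ ≤ 1 :=
  le_trans (Padic.nonarchimedean x y) (max_le hx hy)

theorem norm1_sub {x y : ℚ_[p]} (hx : ‖x‖ ≤ 1) (hy : ‖y‖ ≤ 1) : ‖x - y‖ ≤ 1 := by
  rw [sub_eq_add_neg]
  exact norm1_add hx (by rwa [norm_neg])

theorem norm1_mul {x y : ℚ_[p]} (hx : ‖x‖ ≤ 1) (hy : ‖y‖ ≤ 1) : ‖x * y‖ ≤ 1 := by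
  rw [norm_mul]
  exact mul_le_one₀ hx (norm_nonneg _) hy

theorem norm1_pow {x : ℚ_[p]} (hx : ‖x‖ ≤ 1) (k : ℕ) : ‖x ^ k‖ ≤ 1 := by
  induction k with
  | zero => simp
  | succ k ih => rw [pow_succ]; exact norm1_mul ih hx

theorem norm1_nat (a : ℕ) : ‖(a : ℚ_[p])‖ ≤ 1 := by
  have := Padic.norm_int_le_one (p := p) (a : ℤ)
  push_cast at this
  exact this

noncomputable def d (c : ℤ_[p]ˣ) (m a : ℕ) : ℚ_[p] :=
  (((↑c⁻¹ : ℤ_[p]) * (a : ℤ_[p]) - (s c m a : ℤ_[p]) : ℤ_[p]) : ℚ_[p]) / (p : ℚ_[p]) ^ m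

theorem ppow_ne_zero (m : ℕ) : ((p : ℚ_[p]) ^ m) ≠ 0 :=
  pow_ne_zero _ (Nat.cast_ne_zero.mpr hp.out.ne_zero)

theorem norm_d_le (c : ℤ_[p]ˣ) (m a : ℕ) : ‖d c m a‖ ≤ 1 := by
  obtain ⟨z, hz⟩ := s_spec c m a
  have : d c m a = (z : ℚ_[p]) := by
    rw [d, hz]
    push_cast
    rw [mul_comm, mul_div_assoc, div_self (ppow_ne_zero m), mul_one]
  rw [this]
  exact PadicInt.norm_le_one z

theorem d_mul (c : ℤ_[p]ˣ) (m a : ℕ) :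
    (p : ℚ_[p]) ^ m * d c m a =
      ((↑c⁻¹ : ℤ_[p]) : ℚ_[p]) * a - (s c m a : ℚ_[p]) := by
  rw [d, mul_comm, div_mul_cancel₀ _ (ppow_ne_zero m)]
  push_cast
  ring

noncomputable def w (c : ℤ_[p]ˣ) (m a : ℕ) : ℚ_[p] :=
  ((↑c : ℤ_[p]) : ℚ_[p]) * d c m a + (((↑c : ℤ_[p]) : ℚ_[p]) - 1) / 2

theorem gamma_delta (c : ℤ_[p]ˣ) : ((↑c : ℤ_[p]) : ℚ_[p]) * ((↑c⁻¹ : ℤ_[p]) : ℚ_[p]) = 1 := by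
  have h : ((↑c : ℤ_[p]) * (↑c⁻¹ : ℤ_[p]) : ℤ_[p]) = 1 := by rw [← Units.val_mul]; simp
  calc ((↑c : ℤ_[p]) : ℚ_[p]) * ((↑c⁻¹ : ℤ_[p]) : ℚ_[p])
      = (((↑c : ℤ_[p]) * (↑c⁻¹ : ℤ_[p]) : ℤ_[p]) : ℚ_[p]) := by push_cast; ring
    _ = 1 := by rw [h]; norm_cast

theorem norm_gamma (c : ℤ_[p]ˣ) : ‖((↑c : ℤ_[p]) : ℚ_[p])‖ ≤ 1 := PadicInt.norm_le_one _

theorem norm_two (hp2 : p ≠ 2) : ‖(2 : ℚ_[p])‖ = 1 := by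
  have h1 : ‖((2 : ℤ) : ℚ_[p])‖ ≤ 1 := Padic.norm_int_le_one _
  have h2 : ¬ ((p : ℤ) ∣ 2) := by
    rw [show ((2:ℤ)) = ((2:ℕ):ℤ) by norm_num, Int.natCast_dvd_natCast]
    intro h
    exact hp2 ((Nat.prime_dvd_prime_iff_eq hp.out Nat.prime_two).mp h)
  have h3 : ¬ (‖((2 : ℤ) : ℚ_[p])‖ < 1) := fun hc => h2 ((Padic.norm_intCast_lt_one_iff).mp hc)
  have : ‖((2 : ℤ) : ℚ_[p])‖ = 1 := le_antisymm h1 (not_lt.mp h3)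
  simpa using this

theorem norm_half (hp2 : p ≠ 2) (c : ℤ_[p]ˣ) :
    ‖(((↑c : ℤ_[p]) : ℚ_[p]) - 1) / 2‖ ≤ 1 := by
  rw [norm_div, norm_two hp2, div_one]
  exact norm1_sub (norm_gamma c) norm_one.le

theorem norm_w_le (hp2 : p ≠ 2) (c : ℤ_[p]ˣ) (m a : ℕ) : ‖w c m a‖ ≤ 1 := by
  rw [w]
  exact norm1_add (norm1_mul (norm_gamma c) (norm_d_le c m a)) (norm_half hp2 c)

end MazurAux

namespace MazurAux
variable {p : ℕ} [hp : Fact p.Prime]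

theorem pow_expand1 (k : ℕ) (x y : ℚ_[p]) (hx : ‖x‖ ≤ 1) (hy : ‖y‖ ≤ 1) :
    ∃ h : ℚ_[p], (x + y) ^ k = x ^ k + y * h ∧ ‖h‖ ≤ 1 := by
  induction k with
  | zero => exact ⟨0, by ring, by simp⟩
  | succ k ih =>
    obtain ⟨h, hh, hn⟩ := ih
    refine ⟨x ^ k + h * x + h * y, ?_, ?_⟩
    · rw [pow_succ, hh]; ring
    · exact norm1_add (norm1_add (norm1_pow hx k) (norm1_mul hn hx)) (norm1_mul hn hy)

theorem pow_expand2 (k : ℕ) (x y : ℚ_[p]) (hx : ‖x‖ ≤ 1) (hy : ‖y‖ ≤ 1) :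
    ∃ g : ℚ_[p], (x + y) ^ (k + 1) =
      x ^ (k + 1) + ((k : ℚ_[p]) + 1) * x ^ k * y + y ^ 2 * g ∧ ‖g‖ ≤ 1 := by
  induction k with
  | zero => exact ⟨0, by push_cast; ring, by simp⟩
  | succ k ih =>
    obtain ⟨g, hg, hn⟩ := ih
    refine ⟨((k : ℚ_[p]) + 1) * x ^ k + g * x + g * y, ?_, ?_⟩
    · rw [pow_succ, hg]; push_cast; ring
    · refine norm1_add (norm1_add (norm1_mul ?_ (norm1_pow hx k)) (norm1_mul hn hx))
        (norm1_mul hn hy)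
      have : ((k : ℚ_[p]) + 1) = ((k + 1 : ℕ) : ℚ_[p]) := by push_cast; ring
      rw [this]; exact norm1_nat _

theorem sum_reindex (c : ℤ_[p]ˣ) (m : ℕ) (f : ℕ → ℕ → ℚ_[p]) :
    ∑ a ∈ Finset.range (p ^ m), f a (s c m a) =
      ∑ b ∈ Finset.range (p ^ m), f (s c⁻¹ m b) b := by
  refine Finset.sum_nbij' (s c m) (s c⁻¹ m) ?_ ?_ ?_ ?_ ?_
  · intro a _; exact Finset.mem_range.mpr (s_lt c m a)
  · intro b _; exact Finset.mem_range.mpr (s_lt c⁻¹ m b)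
  · intro a ha
    have := s_s c⁻¹ m a (Finset.mem_range.mp ha)
    rwa [inv_inv] at this
  · intro b hb; exact s_s c m b (Finset.mem_range.mp hb)
  · intro a ha
    congr 1
    have := s_s c⁻¹ m a (Finset.mem_range.mp ha)
    rw [inv_inv] at this
    rw [this]

theorem w_t (c : ℤ_[p]ˣ) (m b : ℕ) (hb : b < p ^ m) :
    w c m (s c⁻¹ m b) =
      ((((↑c : ℤ_[p]) : ℚ_[p]) - 1) / 2) - d c⁻¹ m b := by
  rw [w]
  have key : ((↑c : ℤ_[p]) : ℚ_[p]) * d c m (s c⁻¹ m b) = - d c⁻¹ m b := by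
    apply mul_left_cancel₀ (ppow_ne_zero (p := p) m)
    have h1 := d_mul c m (s c⁻¹ m b)
    have h2 := d_mul c⁻¹ m b
    rw [inv_inv] at h2
    have h3 : s c m (s c⁻¹ m b) = b := s_s c m b hb
    calc (p : ℚ_[p]) ^ m * (((↑c : ℤ_[p]) : ℚ_[p]) * d c m (s c⁻¹ m b))
        = ((↑c : ℤ_[p]) : ℚ_[p]) * ((p : ℚ_[p]) ^ m * d c m (s c⁻¹ m b)) := by ring
      _ = ((↑c : ℤ_[p]) : ℚ_[p]) * (((↑c⁻¹ : ℤ_[p]) : ℚ_[p]) * (s c⁻¹ m b) - (b : ℚ_[p])) := by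
          rw [h1, h3]
      _ = (((↑c : ℤ_[p]) : ℚ_[p]) * ((↑c⁻¹ : ℤ_[p]) : ℚ_[p])) * (s c⁻¹ m b)
            - ((↑c : ℤ_[p]) : ℚ_[p]) * b := by ring
      _ = (s c⁻¹ m b : ℚ_[p]) - ((↑c : ℤ_[p]) : ℚ_[p]) * b := by rw [gamma_delta c, one_mul]
      _ = -((p : ℚ_[p]) ^ m * d c⁻¹ m b) := by rw [h2]; ring
      _ = (p : ℚ_[p]) ^ m * (- d c⁻¹ m b) := by ring
  rw [key]; ring

end MazurAux

namespace MazurAux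
variable {p : ℕ} [hp : Fact p.Prime]

noncomputable def Sq (e m : ℕ) : ℚ_[p] :=
  ∑ a ∈ Finset.range (p ^ m), (a : ℚ_[p]) ^ e

noncomputable def U (c : ℤ_[p]ˣ) (e m : ℕ) : ℚ_[p] :=
  ∑ a ∈ Finset.range (p ^ m), (a : ℚ_[p]) ^ e * w c m a

theorem norm_sum_le_one {s : Finset ℕ} {f : ℕ → ℚ_[p]} (h : ∀ i ∈ s, ‖f i‖ ≤ 1) :
    ‖∑ i ∈ s, f i‖ ≤ 1 :=
  IsUltrametricDist.norm_sum_le_of_forall_le_of_nonneg zero_le_one h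

theorem t_val (c : ℤ_[p]ˣ) (m b : ℕ) :
    ((s c⁻¹ m b : ℕ) : ℚ_[p]) =
      ((↑c : ℤ_[p]) : ℚ_[p]) * b - (p : ℚ_[p]) ^ m * d c⁻¹ m b := by
  have h := d_mul c⁻¹ m b
  rw [inv_inv] at h
  linear_combination h

theorem main_identity (hp2 : p ≠ 2) (c : ℤ_[p]ˣ) (k m : ℕ) :
    ∃ E : ℚ_[p], ‖E‖ ≤ 1 ∧
      ((k : ℚ_[p]) + 2) * U c (k + 1) m * (p : ℚ_[p]) ^ m =
        (1 + ((k : ℚ_[p]) + 1) * ((↑c : ℤ_[p]) : ℚ_[p]) ^ (k + 1)) *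
            ((((↑c : ℤ_[p]) : ℚ_[p]) - 1) / 2) * Sq (p := p) (k + 1) m * (p : ℚ_[p]) ^ m +
          (1 - ((↑c : ℤ_[p]) : ℚ_[p]) ^ (k + 2)) * Sq (p := p) (k + 2) m +
          ((p : ℚ_[p]) ^ m) ^ 2 * E := by
  set γ : ℚ_[p] := ((↑c : ℤ_[p]) : ℚ_[p]) with hγ
  set δ : ℚ_[p] := ((↑c⁻¹ : ℤ_[p]) : ℚ_[p]) with hδ
  set N : ℚ_[p] := (p : ℚ_[p]) ^ m with hN
  have hNle : ‖N‖ ≤ 1 := norm1_pow (norm1_nat p) m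
  have hγδ : γ * δ = 1 := gamma_delta c
  set R : Finset ℕ := Finset.range (p ^ m) with hR
  -- choice functions for the power expansions
  have hGex : ∀ b : ℕ, ∃ g : ℚ_[p],
      (γ * (b : ℚ_[p]) + -(N * d c⁻¹ m b)) ^ (k + 1) =
        (γ * (b : ℚ_[p])) ^ (k + 1) +
          ((k : ℚ_[p]) + 1) * (γ * (b : ℚ_[p])) ^ k * (-(N * d c⁻¹ m b)) +
          (-(N * d c⁻¹ m b)) ^ 2 * g ∧ ‖g‖ ≤ 1 := fun b =>
    pow_expand2 k (γ * (b : ℚ_[p])) (-(N * d c⁻¹ m b))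
      (norm1_mul (norm_gamma c) (norm1_nat b))
      (by rw [norm_neg]; exact norm1_mul hNle (norm_d_le c⁻¹ m b))
  have hHex : ∀ a : ℕ, ∃ h : ℚ_[p],
      (δ * (a : ℚ_[p]) + -(N * d c m a)) ^ (k + 1) =
        (δ * (a : ℚ_[p])) ^ (k + 1) + (-(N * d c m a)) * h ∧ ‖h‖ ≤ 1 := fun a =>
    pow_expand1 (k + 1) (δ * (a : ℚ_[p])) (-(N * d c m a))
      (norm1_mul (norm_gamma c⁻¹) (norm1_nat a))
      (by rw [norm_neg]; exact norm1_mul hNle (norm_d_le c m a))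
  choose G hG hGn using hGex
  choose H hH hHn using hHex
  -- intermediate sums
  set Y : ℚ_[p] := ∑ b ∈ R, (b : ℚ_[p]) * ((s c⁻¹ m b : ℕ) : ℚ_[p]) ^ (k + 1) with hY
  set X : ℚ_[p] := ∑ b ∈ R, (b : ℚ_[p]) ^ (k + 1) * d c⁻¹ m b with hX
  set Z : ℚ_[p] := ∑ b ∈ R, (b : ℚ_[p]) ^ (k + 1) * w c m (s c⁻¹ m b) with hZ
  set E₁ : ℚ_[p] := ∑ b ∈ R, (b : ℚ_[p]) * ((d c⁻¹ m b) ^ 2 * G b) with hE₁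
  set E₂ : ℚ_[p] := -∑ a ∈ R, d c m a * (H a * w c m a) with hE₂
  have hE₁n : ‖E₁‖ ≤ 1 := norm_sum_le_one fun b _ =>
    norm1_mul (norm1_nat b) (norm1_mul (norm1_pow (norm_d_le c⁻¹ m b) 2) (hGn b))
  have hE₂n : ‖E₂‖ ≤ 1 := by
    rw [hE₂, norm_neg]
    exact norm_sum_le_one fun a _ =>
      norm1_mul (norm_d_le c m a) (norm1_mul (hHn a) (norm_w_le hp2 c m a))
  have hS1 : Sq (p := p) (k + 1) m = ∑ b ∈ R, ((s c⁻¹ m b : ℕ) : ℚ_[p]) ^ (k + 1) :=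
    sum_reindex c m fun a _ => (a : ℚ_[p]) ^ (k + 1)
  have hS2 : Sq (p := p) (k + 2) m = ∑ b ∈ R, ((s c⁻¹ m b : ℕ) : ℚ_[p]) ^ (k + 2) :=
    sum_reindex c m fun a _ => (a : ℚ_[p]) ^ (k + 2)
  have hUre : U c (k + 1) m =
      ∑ b ∈ R, ((s c⁻¹ m b : ℕ) : ℚ_[p]) ^ (k + 1) * w c m (s c⁻¹ m b) :=
    sum_reindex c m fun a _ => (a : ℚ_[p]) ^ (k + 1) * w c m a
  -- J1
  have hJ1 : N * U c (k + 1) m =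
      ((γ - 1) / 2) * Sq (p := p) (k + 1) m * N - γ * Y + Sq (p := p) (k + 2) m := by
    rw [hUre, Finset.mul_sum, hS1, hS2, hY]
    rw [Finset.mul_sum, Finset.sum_mul, Finset.mul_sum, ← Finset.sum_sub_distrib,
      ← Finset.sum_add_distrib]
    refine Finset.sum_congr rfl fun b hb => ?_
    have hblt : b < p ^ m := Finset.mem_range.mp hb
    rw [w_t c m b hblt]
    have hd := t_val c m b
    linear_combination -(((s c⁻¹ m b : ℕ) : ℚ_[p]) ^ (k + 1)) * hd
  -- J2
  have hJ2 : Y = γ ^ (k + 1) * Sq (p := p) (k + 2) m - ((k : ℚ_[p]) + 1) * γ ^ k * N * X +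
      N ^ 2 * E₁ := by
    rw [hY, hX, hE₁, Sq]
    rw [Finset.mul_sum, Finset.mul_sum, Finset.mul_sum, ← Finset.sum_sub_distrib,
      ← Finset.sum_add_distrib]
    refine Finset.sum_congr rfl fun b _ => ?_
    have hsv : ((s c⁻¹ m b : ℕ) : ℚ_[p]) = γ * (b : ℚ_[p]) + -(N * d c⁻¹ m b) := by
      rw [t_val c m b]; ring
    rw [hsv, hG b]
    ring
  -- J3
  have hJ3 : X = ((γ - 1) / 2) * Sq (p := p) (k + 1) m - Z := by
    rw [hX, hZ, Sq]
    rw [Finset.mul_sum, ← Finset.sum_sub_distrib]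
    refine Finset.sum_congr rfl fun b hb => ?_
    have hblt : b < p ^ m := Finset.mem_range.mp hb
    rw [w_t c m b hblt]
    ring
  -- J4
  have hZre : Z = ∑ a ∈ R, ((s c m a : ℕ) : ℚ_[p]) ^ (k + 1) * w c m a :=
    (sum_reindex c m fun a b' => ((b' : ℕ) : ℚ_[p]) ^ (k + 1) * w c m a).symm
  have hJ4 : Z = δ ^ (k + 1) * U c (k + 1) m + N * E₂ := by
    rw [hZre, U, hE₂, Finset.mul_sum, mul_neg, Finset.mul_sum, ← Finset.sum_neg_distrib,
      ← Finset.sum_add_distrib]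
    refine Finset.sum_congr rfl fun a _ => ?_
    have hsv : ((s c m a : ℕ) : ℚ_[p]) = δ * (a : ℚ_[p]) + -(N * d c m a) := by
      have h := d_mul c m a
      linear_combination h
    rw [hsv, hH a]
    ring
  -- assembly
  have hγδpow : γ ^ (k + 1) * δ ^ (k + 1) = 1 := by
    rw [← mul_pow, hγδ, one_pow]
  refine ⟨-(((k : ℚ_[p]) + 1) * γ ^ (k + 1) * E₂) - γ * E₁, ?_, ?_⟩
  · refine norm1_sub ?_ (norm1_mul (norm_gamma c) hE₁n)
    rw [norm_neg]
    refine norm1_mul (norm1_mul ?_ (norm1_pow (norm_gamma c) (k + 1))) hE₂n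
    have : ((k : ℚ_[p]) + 1) = ((k + 1 : ℕ) : ℚ_[p]) := by push_cast; ring
    rw [this]; exact norm1_nat _
  · linear_combination hJ1 - γ * hJ2 + ((k : ℚ_[p]) + 1) * γ ^ (k + 1) * N * hJ3 -
      ((k : ℚ_[p]) + 1) * N * γ ^ (k + 1) * hJ4 -
      ((k : ℚ_[p]) + 1) * N * (U c (k + 1) m) * hγδpow

end MazurAux

namespace MazurAux
variable {p : ℕ} [hp : Fact p.Prime]

theorem norm_p_lt_one : ‖(p : ℚ_[p])‖ < 1 := by
  rw [Padic.norm_p]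
  exact inv_lt_one_of_one_lt₀ (by exact_mod_cast hp.out.one_lt)

theorem tendsto_pow_p_zero : Tendsto (fun m : ℕ => ((p : ℚ_[p]) ^ m)) atTop (𝓝 0) :=
  tendsto_pow_atTop_nhds_zero_of_norm_lt_one norm_p_lt_one

/-- Faulhaber: `Sq e m = B_e * p^m + ∑_{i<e} coef i * (p^m)^(e+1-i)`. -/
theorem faulhaber_est (e m : ℕ) :
    Sq (p := p) e m = ((bernoulli e : ℚ) : ℚ_[p]) * (p : ℚ_[p]) ^ m +
      ∑ i ∈ Finset.range e,
        ((bernoulli i * ((e + 1).choose i) / (e + 1) : ℚ) : ℚ_[p]) *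
          ((p : ℚ_[p]) ^ m) ^ (e + 1 - i) := by
  have h := sum_range_pow (p ^ m) e
  have hcast : Sq (p := p) e m = (((∑ a ∈ Finset.range (p ^ m), (a : ℚ) ^ e : ℚ)) : ℚ_[p]) := by
    rw [Sq, Rat.cast_sum]
    push_cast
    rfl
  have he0 : ((e : ℚ) + 1) ≠ 0 := by positivity
  have hTe : ((bernoulli e * (((e + 1).choose e : ℕ) : ℚ) * ((p ^ m : ℕ) : ℚ) ^ (e + 1 - e) /
        ((e : ℚ) + 1) : ℚ) : ℚ_[p]) = ((bernoulli e : ℚ) : ℚ_[p]) * (p : ℚ_[p]) ^ m := by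
    have h1 : e + 1 - e = 1 := by omega
    have h2 : (((e + 1).choose e : ℕ) : ℚ) = (e : ℚ) + 1 := by
      rw [Nat.choose_succ_self_right]; push_cast; ring
    rw [h1, h2]
    have h3 : bernoulli e * ((e : ℚ) + 1) * ((p ^ m : ℕ) : ℚ) ^ 1 / ((e : ℚ) + 1) =
        bernoulli e * ((p ^ m : ℕ) : ℚ) := by field_simp
    rw [h3]
    push_cast
    ring
  have hsum : ((∑ i ∈ Finset.range e, bernoulli i * (((e + 1).choose i : ℕ) : ℚ) *
        ((p ^ m : ℕ) : ℚ) ^ (e + 1 - i) / ((e : ℚ) + 1) : ℚ) : ℚ_[p]) =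
      ∑ i ∈ Finset.range e,
        ((bernoulli i * ((e + 1).choose i) / (e + 1) : ℚ) : ℚ_[p]) *
          ((p : ℚ_[p]) ^ m) ^ (e + 1 - i) := by
    rw [Rat.cast_sum]
    refine Finset.sum_congr rfl fun i _ => ?_
    push_cast
    ring
  calc Sq (p := p) e m
      = (((∑ a ∈ Finset.range (p ^ m), (a : ℚ) ^ e : ℚ)) : ℚ_[p]) := hcast
    _ = ((∑ i ∈ Finset.range (e + 1), bernoulli i * (((e + 1).choose i : ℕ) : ℚ) *
          ((p ^ m : ℕ) : ℚ) ^ (e + 1 - i) / ((e : ℚ) + 1) : ℚ) : ℚ_[p]) := by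
        rw [h]
    _ = _ := by
        rw [Finset.sum_range_succ, Rat.cast_add, hsum, hTe]
        ring

end MazurAux

namespace MazurAux
variable {p : ℕ} [hp : Fact p.Prime]

theorem Sq_div_tendsto (e : ℕ) :
    Tendsto (fun m => Sq (p := p) e m / (p : ℚ_[p]) ^ m) atTop
      (𝓝 ((bernoulli e : ℚ) : ℚ_[p])) := by
  have key : ∀ m, Sq (p := p) e m / (p : ℚ_[p]) ^ m =
      ((bernoulli e : ℚ) : ℚ_[p]) +
        ∑ i ∈ Finset.range e,
          ((bernoulli i * ((e + 1).choose i) / (e + 1) : ℚ) : ℚ_[p]) *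
            ((p : ℚ_[p]) ^ (e - i)) ^ m := by
    intro m
    rw [faulhaber_est e m]
    have hN : ((p : ℚ_[p]) ^ m) ≠ 0 := ppow_ne_zero m
    field_simp
    rw [mul_add, Finset.mul_sum]
    refine congrArg₂ (· + ·) (mul_comm _ _) (Finset.sum_congr rfl fun i hi => ?_)
    have h1 : e + 1 - i = (e - i) + 1 := by
      have := Finset.mem_range.mp hi; omega
    have h2 : ((p : ℚ_[p]) ^ m) ^ (e + 1 - i) =
        ((p : ℚ_[p]) ^ (e - i)) ^ m * (p : ℚ_[p]) ^ m := by
      rw [h1, pow_succ, ← pow_mul, mul_comm m (e - i), pow_mul]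
    rw [h2]
    ring
  rw [show (𝓝 ((bernoulli e : ℚ) : ℚ_[p])) = 𝓝 (((bernoulli e : ℚ) : ℚ_[p]) + 0) by rw [add_zero]]
  refine Tendsto.congr (fun m => (key m).symm) (Tendsto.add tendsto_const_nhds ?_)
  rw [show (0 : ℚ_[p]) = ∑ i ∈ Finset.range e, ((bernoulli i * ((e + 1).choose i) / (e + 1) : ℚ) : ℚ_[p]) * 0 by simp]
  refine tendsto_finset_sum _ fun i hi => Tendsto.const_mul _ ?_
  refine tendsto_pow_atTop_nhds_zero_of_norm_lt_one ?_
  have h1 : 1 ≤ e - i := by have := Finset.mem_range.mp hi; omega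
  calc ‖(p : ℚ_[p]) ^ (e - i)‖ = ‖(p : ℚ_[p])‖ ^ (e - i) := norm_pow _ _
    _ ≤ ‖(p : ℚ_[p])‖ ^ 1 := pow_le_pow_of_le_one (norm_nonneg _) norm_p_lt_one.le h1
    _ < 1 := by rw [pow_one]; exact norm_p_lt_one

theorem U_tendsto (hp2 : p ≠ 2) (c : ℤ_[p]ˣ) (k : ℕ) :
    Tendsto (fun m => U c (k + 1) m) atTop
      (𝓝 ((1 - ((↑c : ℤ_[p]) : ℚ_[p]) ^ (k + 2)) * ((bernoulli (k + 2) : ℚ) : ℚ_[p]) /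
        ((k : ℚ_[p]) + 2))) := by
  set γ : ℚ_[p] := ((↑c : ℤ_[p]) : ℚ_[p]) with hγ
  choose E hEn hEq using fun m => main_identity hp2 c k m
  have hk2 : ((k : ℚ_[p]) + 2) ≠ 0 := by
    have : ((k : ℚ_[p]) + 2) = ((k + 2 : ℕ) : ℚ_[p]) := by push_cast; ring
    rw [this]
    exact Nat.cast_ne_zero.mpr (by omega)
  have key : ∀ m, ((k : ℚ_[p]) + 2) * U c (k + 1) m =
      (1 + ((k : ℚ_[p]) + 1) * γ ^ (k + 1)) * ((γ - 1) / 2) *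
          (Sq (p := p) (k + 1) m / (p : ℚ_[p]) ^ m) * (p : ℚ_[p]) ^ m +
        (1 - γ ^ (k + 2)) * (Sq (p := p) (k + 2) m / (p : ℚ_[p]) ^ m) +
        (p : ℚ_[p]) ^ m * E m := by
    intro m
    have h := hEq m
    have hN : ((p : ℚ_[p]) ^ m) ≠ 0 := ppow_ne_zero m
    apply mul_right_cancel₀ hN
    rw [h]
    field_simp
    ring
  have h1 : Tendsto (fun m => ((k : ℚ_[p]) + 2) * U c (k + 1) m) atTop
      (𝓝 ((1 - γ ^ (k + 2)) * ((bernoulli (k + 2) : ℚ) : ℚ_[p]))) := by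
    refine Tendsto.congr (fun m => (key m).symm) ?_
    have hA : Tendsto (fun m => (1 + ((k : ℚ_[p]) + 1) * γ ^ (k + 1)) * ((γ - 1) / 2) *
        (Sq (p := p) (k + 1) m / (p : ℚ_[p]) ^ m) * (p : ℚ_[p]) ^ m) atTop (𝓝 0) := by
      have := ((Sq_div_tendsto (p := p) (k + 1)).const_mul
        ((1 + ((k : ℚ_[p]) + 1) * γ ^ (k + 1)) * ((γ - 1) / 2))).mul tendsto_pow_p_zero
      simpa using this
    have hB : Tendsto (fun m => (1 - γ ^ (k + 2)) *
        (Sq (p := p) (k + 2) m / (p : ℚ_[p]) ^ m)) atTop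
        (𝓝 ((1 - γ ^ (k + 2)) * ((bernoulli (k + 2) : ℚ) : ℚ_[p]))) :=
      (Sq_div_tendsto (p := p) (k + 2)).const_mul _
    have hC : Tendsto (fun m => (p : ℚ_[p]) ^ m * E m) atTop (𝓝 0) := by
      have hb : ∀ m, ‖(p : ℚ_[p]) ^ m * E m‖ ≤ ((p : ℝ)⁻¹) ^ m := by
        intro m
        calc ‖(p : ℚ_[p]) ^ m * E m‖ = ‖(p : ℚ_[p]) ^ m‖ * ‖E m‖ := norm_mul _ _
          _ ≤ ‖(p : ℚ_[p]) ^ m‖ * 1 := by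
              exact mul_le_mul_of_nonneg_left (hEn m) (norm_nonneg _)
          _ = ((p : ℝ)⁻¹) ^ m := by
              rw [mul_one, _root_.norm_pow, Padic.norm_p]
      refine squeeze_zero_norm hb ?_
      refine tendsto_pow_atTop_nhds_zero_of_lt_one (by positivity) ?_
      exact inv_lt_one_of_one_lt₀ (by exact_mod_cast hp.out.one_lt)
    have := (hA.add hB).add hC
    simpa using this
  have h2 := h1.const_mul (((k : ℚ_[p]) + 2))⁻¹
  rw [show (1 - γ ^ (k + 2)) * ((bernoulli (k + 2) : ℚ) : ℚ_[p]) / ((k : ℚ_[p]) + 2) =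
    ((k : ℚ_[p]) + 2)⁻¹ * ((1 - γ ^ (k + 2)) * ((bernoulli (k + 2) : ℚ) : ℚ_[p])) from by ring]
  refine Tendsto.congr (fun m => ?_) h2
  rw [← mul_assoc, inv_mul_cancel₀ hk2, one_mul]

end MazurAux

namespace MazurAux
variable {p : ℕ} [hp : Fact p.Prime]

noncomputable def F (c : ℤ_[p]ˣ) (e m : ℕ) : ℚ_[p] :=
  ∑ a ∈ (Finset.range (p ^ m)).filter (fun a => ¬ p ∣ a), (a : ℚ_[p]) ^ e * w c m a

theorem s_mul_p (c : ℤ_[p]ˣ) (m a' : ℕ) : s c (m + 1) (p * a') = p * s c m a' := by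
  apply appr_unique
  · rw [pow_succ']
    exact (Nat.mul_lt_mul_left hp.out.pos).mpr (s_lt c m a')
  · obtain ⟨z, hz⟩ := s_spec c m a'
    rw [Ideal.mem_span_singleton]
    refine ⟨z, ?_⟩
    push_cast
    rw [pow_succ']
    linear_combination (p : ℤ_[p]) * hz

theorem w_mul_p (c : ℤ_[p]ˣ) (m a' : ℕ) : w c (m + 1) (p * a') = w c m a' := by
  rw [w, w]
  congr 1
  congr 1
  rw [d, d, s_mul_p c m a']
  have hnum : ((↑c⁻¹ : ℤ_[p]) * ((p * a' : ℕ) : ℤ_[p]) - ((p * s c m a' : ℕ) : ℤ_[p])) =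
      (p : ℤ_[p]) * ((↑c⁻¹ : ℤ_[p]) * (a' : ℤ_[p]) - (s c m a' : ℤ_[p])) := by
    push_cast
    ring
  rw [hnum]
  have hp0 : (p : ℚ_[p]) ≠ 0 := Nat.cast_ne_zero.mpr hp.out.ne_zero
  push_cast
  rw [pow_succ']
  rw [mul_div_mul_left _ _ hp0]

theorem mult_sum_reindex (m : ℕ) (f : ℕ → ℚ_[p]) :
    ∑ a ∈ (Finset.range (p ^ (m + 1))).filter (fun a => p ∣ a), f a =
      ∑ a' ∈ Finset.range (p ^ m), f (p * a') := by
  refine Finset.sum_nbij' (fun a => a / p) (fun a' => p * a') ?_ ?_ ?_ ?_ ?_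
  · intro a ha
    obtain ⟨ha1, ha2⟩ := Finset.mem_filter.mp ha
    rw [Finset.mem_range] at ha1 ⊢
    rw [Nat.div_lt_iff_lt_mul hp.out.pos]
    rw [pow_succ] at ha1
    exact ha1
  · intro a' ha'
    rw [Finset.mem_range] at ha'
    refine Finset.mem_filter.mpr ⟨Finset.mem_range.mpr ?_, ⟨a', rfl⟩⟩
    rw [pow_succ']
    exact (Nat.mul_lt_mul_left hp.out.pos).mpr ha'
  · intro a ha
    exact Nat.mul_div_cancel' (Finset.mem_filter.mp ha).2
  · intro a' _
    exact Nat.mul_div_cancel_left a' hp.out.pos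
  · intro a ha
    rw [Nat.mul_div_cancel' (Finset.mem_filter.mp ha).2]

theorem F_succ (c : ℤ_[p]ˣ) (e m : ℕ) :
    F c e (m + 1) = U c e (m + 1) - (p : ℚ_[p]) ^ e * U c e m := by
  have hsplit := Finset.sum_filter_add_sum_filter_not (Finset.range (p ^ (m + 1)))
    (fun a => p ∣ a) (fun a => (a : ℚ_[p]) ^ e * w c (m + 1) a)
  have hmult : ∑ a ∈ (Finset.range (p ^ (m + 1))).filter (fun a => p ∣ a),
      (a : ℚ_[p]) ^ e * w c (m + 1) a = (p : ℚ_[p]) ^ e * U c e m := by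
    rw [mult_sum_reindex m (fun a => (a : ℚ_[p]) ^ e * w c (m + 1) a), U, Finset.mul_sum]
    refine Finset.sum_congr rfl fun a' _ => ?_
    rw [w_mul_p c m a']
    push_cast
    ring
  rw [F, U, ← hsplit, hmult]
  ring

theorem F_tendsto (hp2 : p ≠ 2) (c : ℤ_[p]ˣ) (k : ℕ) :
    Tendsto (fun m => F c (k + 1) m) atTop
      (𝓝 ((1 - (p : ℚ_[p]) ^ (k + 1)) *
        ((1 - ((↑c : ℤ_[p]) : ℚ_[p]) ^ (k + 2)) * ((bernoulli (k + 2) : ℚ) : ℚ_[p]) /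
          ((k : ℚ_[p]) + 2)))) := by
  set L : ℚ_[p] := (1 - ((↑c : ℤ_[p]) : ℚ_[p]) ^ (k + 2)) * ((bernoulli (k + 2) : ℚ) : ℚ_[p]) /
    ((k : ℚ_[p]) + 2) with hL
  have hU := U_tendsto hp2 c k
  rw [← Filter.tendsto_add_atTop_iff_nat 1]
  have h1 : Tendsto (fun m => U c (k + 1) (m + 1)) atTop (𝓝 L) :=
    hU.comp (tendsto_add_atTop_nat 1)
  have h2 : Tendsto (fun m => (p : ℚ_[p]) ^ (k + 1) * U c (k + 1) m) atTop
      (𝓝 ((p : ℚ_[p]) ^ (k + 1) * L)) := hU.const_mul _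
  have h3 := h1.sub h2
  refine Tendsto.congr (fun m => (F_succ c (k + 1) m).symm) ?_
  rw [show (1 - (p : ℚ_[p]) ^ (k + 1)) * L = L - (p : ℚ_[p]) ^ (k + 1) * L from by ring]
  exact h3

end MazurAux

namespace MazurAux
variable {p : ℕ} [hp : Fact p.Prime]

theorem euler_pow_bound (j j' : ℕ) (hjj' : j ≤ j') (a : ℕ) (ha : ¬ p ∣ a) :
    ‖((a : ℚ_[p])) ^ ((p - 1) * p ^ j' - 1) - ((a : ℚ_[p])) ^ ((p - 1) * p ^ j - 1)‖ ≤
      (p : ℝ) ^ (-(j + 1 : ℕ) : ℤ) := by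
  set n : ℕ := (p - 1) * p ^ j with hn
  set n' : ℕ := (p - 1) * p ^ j' with hn'
  have hp1 : 1 ≤ p - 1 := by have := hp.out.two_le; omega
  have hn1 : 1 ≤ n := Nat.one_le_iff_ne_zero.mpr (Nat.mul_ne_zero (by omega) (pow_ne_zero _ hp.out.ne_zero))
  have hnn' : n' = n * p ^ (j' - j) := by
    rw [hn, hn', mul_assoc, ← pow_add]
    congr 2
    omega
  have hnle : n ≤ n' := by
    rw [hnn']
    exact Nat.le_mul_of_pos_right n (pow_pos hp.out.pos _)
  have hcop : Nat.Coprime a (p ^ (j + 1)) :=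
    Nat.Coprime.pow_right _ ((Nat.Prime.coprime_iff_not_dvd hp.out).mpr ha).symm
  have htot : Nat.totient (p ^ (j + 1)) = n := by
    rw [Nat.totient_prime_pow hp.out (Nat.succ_pos j)]
    simp [hn, mul_comm]
  have hmod : a ^ n ≡ 1 [MOD p ^ (j + 1)] := by
    rw [← htot]
    exact Nat.ModEq.pow_totient hcop
  have hmod2 : a ^ (n' - n) ≡ 1 [MOD p ^ (j + 1)] := by
    have h1 : n' - n = n * (p ^ (j' - j) - 1) := by
      rw [hnn', Nat.mul_sub, mul_one]
    rw [h1, pow_mul]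
    calc (a ^ n) ^ (p ^ (j' - j) - 1) ≡ 1 ^ (p ^ (j' - j) - 1) [MOD p ^ (j + 1)] :=
          hmod.pow _
      _ = 1 := one_pow _
  have hmod3 : a ^ (n' - 1) ≡ a ^ (n - 1) [MOD p ^ (j + 1)] := by
    have h2 : a ^ (n' - 1) = a ^ (n - 1) * a ^ (n' - n) := by
      rw [← pow_add]
      congr 1
      omega
    rw [h2]
    calc a ^ (n - 1) * a ^ (n' - n) ≡ a ^ (n - 1) * 1 [MOD p ^ (j + 1)] :=
          Nat.ModEq.mul_left _ hmod2
      _ = a ^ (n - 1) := mul_one _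
  have hdvd : ((p : ℤ) ^ (j + 1)) ∣ ((a : ℤ) ^ (n' - 1) - (a : ℤ) ^ (n - 1)) := by
    have h2 := Nat.ModEq.dvd hmod3
    -- hmod3 : a^(n'-1) ≡ a^(n-1), Nat.ModEq.dvd : (n:ℤ) ∣ (b:ℤ) - (a:ℤ) for a ≡ b
    push_cast at h2
    exact dvd_sub_comm.mp h2
  have hkey := (Padic.norm_int_le_pow_iff_dvd (p := p)
    ((a : ℤ) ^ (n' - 1) - (a : ℤ) ^ (n - 1)) (j + 1)).mpr hdvd
  have hc : (((((a : ℤ) ^ (n' - 1) - (a : ℤ) ^ (n - 1)) : ℤ)) : ℚ_[p]) =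
      ((a : ℚ_[p])) ^ (n' - 1) - ((a : ℚ_[p])) ^ (n - 1) := by push_cast; ring
  rw [hc] at hkey
  exact_mod_cast hkey

theorem norm_F_le (hp2 : p ≠ 2) (c : ℤ_[p]ˣ) (e m : ℕ) : ‖F c e m‖ ≤ 1 :=
  norm_sum_le_one fun a _ => norm1_mul (norm1_pow (norm1_nat a) e) (norm_w_le hp2 c m a)

theorem norm_F_diff_le (hp2 : p ≠ 2) (c : ℤ_[p]ˣ) (j j' m : ℕ) (hjj' : j ≤ j') :
    ‖F c ((p - 1) * p ^ j' - 1) m - F c ((p - 1) * p ^ j - 1) m‖ ≤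
      (p : ℝ) ^ (-(j + 1 : ℕ) : ℤ) := by
  rw [F, F, ← Finset.sum_sub_distrib]
  refine IsUltrametricDist.norm_sum_le_of_forall_le_of_nonneg (by positivity) fun a hamem => ?_
  have ha : ¬ p ∣ a := (Finset.mem_filter.mp hamem).2
  rw [← sub_mul]
  calc ‖((a : ℚ_[p]) ^ ((p - 1) * p ^ j' - 1) - (a : ℚ_[p]) ^ ((p - 1) * p ^ j - 1)) * w c m a‖
      = ‖(a : ℚ_[p]) ^ ((p - 1) * p ^ j' - 1) - (a : ℚ_[p]) ^ ((p - 1) * p ^ j - 1)‖ * ‖w c m a‖ :=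
        norm_mul _ _
    _ ≤ (p : ℝ) ^ (-(j + 1 : ℕ) : ℤ) * 1 := by
        refine mul_le_mul (euler_pow_bound j j' hjj' a ha) (norm_w_le hp2 c m a)
          (norm_nonneg _) (by positivity)
    _ = (p : ℝ) ^ (-(j + 1 : ℕ) : ℤ) := mul_one _

end MazurAux

/-- `a_j = (1 − c^{(p−1)pʲ})·(1 − p^{(p−1)pʲ−1})·(−B_{(p−1)pʲ}/((p−1)pʲ)) ∈ ℚ_p`, the
moment of the Mazur measure in position `(p−1)pʲ`. -/
noncomputable def mazurMoment (p : ℕ) [Fact p.Prime] (c : ℤ_[p]ˣ) (j : ℕ) : ℚ_[p] :=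
  ((1 - (c : ℤ_[p]) ^ ((p - 1) * p ^ j) : ℤ_[p]) : ℚ_[p]) *
    ((((1 - (p : ℚ) ^ ((p - 1) * p ^ j - 1)) *
        (-(bernoulli ((p - 1) * p ^ j)) / (((p - 1) * p ^ j : ℕ) : ℚ))) : ℚ) : ℚ_[p])

namespace MazurAux
variable {p : ℕ} [hp : Fact p.Prime]

theorem two_le_n (hp2 : p ≠ 2) (j : ℕ) : 2 ≤ (p - 1) * p ^ j := by
  have h3 : 3 ≤ p := by have := hp.out.two_le; omega
  have h1 : 1 ≤ p ^ j := Nat.one_le_pow _ _ hp.out.pos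
  calc 2 ≤ (p - 1) * 1 := by omega
    _ ≤ (p - 1) * p ^ j := Nat.mul_le_mul_left _ h1

theorem mazur_eq (hp2 : p ≠ 2) (c : ℤ_[p]ˣ) (j : ℕ) (k : ℕ)
    (hk : (p - 1) * p ^ j = k + 2) :
    mazurMoment p c j =
      -((1 - (p : ℚ_[p]) ^ (k + 1)) *
        ((1 - ((↑c : ℤ_[p]) : ℚ_[p]) ^ (k + 2)) * ((bernoulli (k + 2) : ℚ) : ℚ_[p]) /
          ((k : ℚ_[p]) + 2))) := by
  rw [mazurMoment, hk]
  have h1 : k + 2 - 1 = k + 1 := by omega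
  rw [h1]
  have hc1 : ((1 - (c : ℤ_[p]) ^ (k + 2) : ℤ_[p]) : ℚ_[p]) =
      1 - ((↑c : ℤ_[p]) : ℚ_[p]) ^ (k + 2) := by push_cast; ring
  have hc2 : ((((1 - (p : ℚ) ^ (k + 1)) *
      (-(bernoulli (k + 2)) / (((k + 2 : ℕ)) : ℚ))) : ℚ) : ℚ_[p]) =
      (1 - (p : ℚ_[p]) ^ (k + 1)) *
        (-(((bernoulli (k + 2) : ℚ) : ℚ_[p])) / ((k : ℚ_[p]) + 2)) := by
    push_cast
    ring
  rw [hc1, hc2]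
  ring

end MazurAux

open MazurAux Filter Topology in
/-- for an odd prime `p` and `c ∈ ℤ_p^×` with `c ≠ ±1`, each `a_j` lies in
`ℤ_p`, for `j ≤ j'` one has `a_{j'} − a_j ∈ p^{j+1}·ℤ_p`, and consequently the sequence
`(a_j)` converges in `ℤ_p`. -/
theorem mazurMoment_converges (p : ℕ) [Fact p.Prime] (hp : p ≠ 2) (c : ℤ_[p]ˣ)
    (hc1 : (c : ℤ_[p]) ≠ 1) (hc2 : (c : ℤ_[p]) ≠ -1) :
    (∀ j : ℕ, ‖mazurMoment p c j‖ ≤ 1) ∧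
    (∀ j j' : ℕ, j ≤ j' → ∃ y : ℤ_[p],
        mazurMoment p c j' - mazurMoment p c j = (p : ℚ_[p]) ^ (j + 1) * (y : ℚ_[p])) ∧
    (∃ L : ℤ_[p], Filter.Tendsto (mazurMoment p c) Filter.atTop (nhds (L : ℚ_[p]))) := by
  -- convergence of the Riemann sums to each moment
  have hM : ∀ j : ℕ, Tendsto (fun m => -(F c ((p - 1) * p ^ j - 1) m)) atTop
      (𝓝 (mazurMoment p c j)) := by
    intro j
    set k : ℕ := (p - 1) * p ^ j - 2 with hkdef
    have hn2 := two_le_n hp j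
    have hk2 : (p - 1) * p ^ j = k + 2 := by omega
    have hk1 : (p - 1) * p ^ j - 1 = k + 1 := by omega
    rw [mazur_eq hp c j k hk2, hk1]
    exact (F_tendsto hp c k).neg
  -- part 1
  have part1 : ∀ j : ℕ, ‖mazurMoment p c j‖ ≤ 1 := by
    intro j
    refine le_of_tendsto (hM j).norm (Eventually.of_forall fun m => ?_)
    rw [norm_neg]
    exact norm_F_le hp c _ m
  -- norm bound on differences
  have hdiff : ∀ j j' : ℕ, j ≤ j' →
      ‖mazurMoment p c j' - mazurMoment p c j‖ ≤ (p : ℝ) ^ (-(j + 1 : ℕ) : ℤ) := by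
    intro j j' hjj'
    have hT := (hM j').sub (hM j)
    refine le_of_tendsto hT.norm (Eventually.of_forall fun m => ?_)
    have he : -(F c ((p - 1) * p ^ j' - 1) m) - -(F c ((p - 1) * p ^ j - 1) m) =
        -(F c ((p - 1) * p ^ j' - 1) m - F c ((p - 1) * p ^ j - 1) m) := by ring
    rw [he, norm_neg]
    exact norm_F_diff_le hp c j j' m hjj'
  have hppos : (0 : ℝ) < (p : ℝ) := by exact_mod_cast Fact.out (p := p.Prime) |>.pos
  have hnormp : ∀ j : ℕ, ‖(p : ℚ_[p]) ^ (j + 1)‖ = (p : ℝ) ^ (-(j + 1 : ℕ) : ℤ) := by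
    intro j
    rw [_root_.norm_pow, Padic.norm_p, inv_pow, ← zpow_natCast, ← zpow_neg]
  refine ⟨part1, ?_, ?_⟩
  · -- part 2
    intro j j' hjj'
    set D : ℚ_[p] := mazurMoment p c j' - mazurMoment p c j with hD
    set z : ℚ_[p] := D / (p : ℚ_[p]) ^ (j + 1) with hz
    have hzn : ‖z‖ ≤ 1 := by
      rw [hz, norm_div, hnormp j]
      rw [div_le_one (by positivity)]
      simpa using hdiff j j' hjj'
    refine ⟨⟨z, hzn⟩, ?_⟩
    show D = (p : ℚ_[p]) ^ (j + 1) * z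
    rw [hz, mul_comm, div_mul_cancel₀ _ (ppow_ne_zero (j + 1))]
  · -- part 3
    have hb : ∀ N : ℕ, (p : ℝ) ^ (-(N + 1 : ℕ) : ℤ) = ((p : ℝ)⁻¹) ^ (N + 1) := by
      intro N
      rw [inv_pow, ← zpow_natCast, ← zpow_neg]
    have hcauchy : CauchySeq (mazurMoment p c) := by
      refine cauchySeq_of_le_tendsto_0 (fun N => (p : ℝ) ^ (-(N + 1 : ℕ) : ℤ)) ?_ ?_
      · intro n m N hn hm
        rw [dist_eq_norm]
        rcases le_total n m with h | h
        · rw [norm_sub_rev]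
          refine le_trans (hdiff n m h) ?_
          refine zpow_le_zpow_right₀ (by exact_mod_cast Fact.out (p := p.Prime) |>.one_le) ?_
          omega
        · refine le_trans (hdiff m n h) ?_
          refine zpow_le_zpow_right₀ (by exact_mod_cast Fact.out (p := p.Prime) |>.one_le) ?_
          omega
      · refine Tendsto.congr (fun N => (hb N).symm) ?_
        have h1 : (p : ℝ)⁻¹ < 1 :=
          inv_lt_one_of_one_lt₀ (by exact_mod_cast Fact.out (p := p.Prime) |>.one_lt)
        exact (tendsto_pow_atTop_nhds_zero_of_lt_one (by positivity) h1).comp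
          (tendsto_add_atTop_nat 1)
    obtain ⟨L', hL'⟩ := cauchySeq_tendsto_of_complete hcauchy
    have hL1 : ‖L'‖ ≤ 1 := le_of_tendsto hL'.norm (Eventually.of_forall part1)
    exact ⟨⟨L', hL1⟩, hL'⟩
end
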